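/- arXiv:2510.15640 — 11 statements merged into one kernel-verified Lean document; each statement's English description precedes it below -/
import Mathlib

section
/- Let (A, ·, {,,}) be a Nambu-Poisson algebra over a field k of characteristic 0, V a k-vector space, μ: A→End(V) a linear map and ρ: A×A→End(V) a skew-symmetric bilinear map. Then (V;μ,ρ) is a representation of the Nambu-Poisson algebra A if and only if the operations (a,u)·_⋉(b,v) := (a·b, μ(a)v + μ(b)u) and {(a,u),(b,v),(c,w)}_⋉ := ({a,b,c}, ρ(a,b)w + ρ(b,c)u + ρ(c,a)v) make A⊕V into a Nambu-Poisson algebra. -/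
namespace NPPaper

variable {A V : Type*} [AddCommGroup A] [AddCommGroup V]

/-- A commutative associative multiplication (axioms on a plain binary operation). -/
def IsCommAssocFun (m : A → A → A) : Prop :=
  (∀ a b, m a b = m b a) ∧ (∀ a b c, m (m a b) c = m a (m b c))

/-- A 3-Lie bracket: skew-symmetric and satisfying the fundamental identity. -/
def IsThreeLieFun (br : A → A → A → A) : Prop :=
  (∀ a b c, br a b c = - br b a c) ∧ (∀ a b c, br a b c = - br a c b) ∧
  (∀ a b c d e, br a b (br c d e) =
      br (br a b c) d e + br c (br a b d) e + br c d (br a b e))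

/-- A Nambu-Poisson structure: commutative associative product, 3-Lie bracket,
and the Leibniz rule. -/
def IsNambuPoissonFun (m : A → A → A) (br : A → A → A → A) : Prop :=
  IsCommAssocFun m ∧ IsThreeLieFun br ∧
  (∀ a b c d, br a b (m c d) = m (br a b c) d + m c (br a b d))

/-- A representation of a 3-Lie algebra (pointwise form, skew-symmetry included). -/
def IsThreeLieRepFun (br : A → A → A → A) (ρ : A → A → V → V) : Prop :=
  (∀ a b v, ρ a b v = - ρ b a v) ∧
  (∀ a b c d v, ρ a b (ρ c d v) - ρ c d (ρ a b v) =
      ρ (br a b c) d v + ρ c (br a b d) v) ∧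
  (∀ a b c d v, ρ (br a b c) d v =
      ρ a b (ρ c d v) + ρ b c (ρ a d v) + ρ c a (ρ b d v))

/-- A representation of a Nambu-Poisson algebra (pointwise form). -/
def IsNPRepFun (m : A → A → A) (br : A → A → A → A)
    (μ : A → V → V) (ρ : A → A → V → V) : Prop :=
  (∀ a b v, μ (m a b) v = μ a (μ b v)) ∧
  IsThreeLieRepFun br ρ ∧
  (∀ a b c v, μ (br a b c) v = ρ a b (μ c v) - μ c (ρ a b v)) ∧
  (∀ a b c v, ρ a (m b c) v = μ b (ρ a c v) + μ c (ρ a b v))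

/-- A Harrison 2-cocycle of a commutative associative algebra with coefficients
in a representation. -/
def IsHarrison2CocycleFun (m : A → A → A) (μ : A → V → V) (φ : A → A → V) : Prop :=
  (∀ a b, φ a b = φ b a) ∧
  (∀ a b c, μ a (φ b c) - φ (m a b) c + φ a (m b c) - μ c (φ a b) = 0)

/-- A 2-cocycle of a 3-Lie algebra with coefficients in a representation. -/
def IsThreeLie2CocycleFun (br : A → A → A → A) (ρ : A → A → V → V)
    (ψ : A → A → A → V) : Prop :=
  (∀ a b c, ψ a b c = - ψ b a c) ∧ (∀ a b c, ψ a b c = - ψ a c b) ∧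
  (∀ a b c d e, ψ a b (br c d e) + ρ a b (ψ c d e) =
      ψ (br a b c) d e + ψ c (br a b d) e + ψ c d (br a b e)
      + ρ d e (ψ a b c) + ρ e c (ψ a b d) + ρ c d (ψ a b e))

/-- A Nambu-Poisson 2-cocycle. -/
def IsNP2CocycleFun (m : A → A → A) (br : A → A → A → A)
    (μ : A → V → V) (ρ : A → A → V → V)
    (φ : A → A → V) (ψ : A → A → A → V) : Prop :=
  IsHarrison2CocycleFun m μ φ ∧ IsThreeLie2CocycleFun br ρ ψ ∧
  (∀ a b c d, ψ a b (m c d) + ρ a b (φ c d) =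
      φ c (br a b d) + μ c (ψ a b d) + φ (br a b c) d + μ d (ψ a b c))

/-- A Poisson algebra structure. -/
def IsPoissonFun (m : A → A → A) (pb : A → A → A) : Prop :=
  IsCommAssocFun m ∧
  (∀ a b, pb a b = - pb b a) ∧
  (∀ a b c, pb a (pb b c) = pb (pb a b) c + pb b (pb a c)) ∧
  (∀ a b c, pb a (m b c) = m (pb a b) c + m b (pb a c))

/-- A representation of a Poisson algebra (pointwise form). -/
def IsPoissonRepFun (m : A → A → A) (pb : A → A → A) (μ ρb : A → V → V) : Prop :=
  (∀ a b v, μ (m a b) v = μ a (μ b v)) ∧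
  (∀ a b v, ρb (pb a b) v = ρb a (ρb b v) - ρb b (ρb a v)) ∧
  (∀ a b v, μ (pb a b) v = ρb a (μ b v) - μ b (ρb a v)) ∧
  (∀ a b v, ρb (m a b) v = μ a (ρb b v) + μ b (ρb a v))

/-- A Poisson 2-cocycle. -/
def IsPoisson2CocycleFun (m pb : A → A → A) (μ ρb : A → V → V)
    (φ ψb : A → A → V) : Prop :=
  IsHarrison2CocycleFun m μ φ ∧
  (∀ a b, ψb a b = - ψb b a) ∧
  (∀ a b c, ρb a (ψb b c) + ρb b (ψb c a) + ρb c (ψb a b)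
      + ψb a (pb b c) + ψb b (pb c a) + ψb c (pb a b) = 0) ∧
  (∀ a b c, ψb a (m b c) + ρb a (φ b c) =
      φ b (pb a c) + μ b (ψb a c) + φ (pb a b) c + μ c (ψb a b))

/-- A Nijenhuis operator on a Nambu-Poisson algebra. -/
def IsNijenhuisFun (m : A → A → A) (br : A → A → A → A) (N : A → A) : Prop :=
  (∀ a b, m (N a) (N b) = N (m (N a) b + m a (N b) - N (m a b))) ∧
  (∀ a b c, br (N a) (N b) (N c) =
      N (br (N a) (N b) c + br (N a) b (N c) + br a (N b) (N c)
        - N (br (N a) b c + br a (N b) c + br a b (N c) - N (br a b c))))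

/-- The total multiplication `a ⊙ b = a ⋄ b + b ⋄ a + a * b` of an NS-commutative algebra. -/
def odotFun (d s : A → A → A) (a b : A) : A := d a b + d b a + s a b

/-- The total bracket `{{a,b,c}} = [a,b,c] + [b,c,a] + [c,a,b] + ⟦a,b,c⟧` of an NS-3-Lie algebra. -/
def ttotFun (t l : A → A → A → A) (a b c : A) : A :=
  t a b c + t b c a + t c a b + l a b c

/-- An NS-commutative algebra. -/
def IsNSCommFun (d s : A → A → A) : Prop :=
  (∀ a b, s a b = s b a) ∧
  (∀ a b c, d a (d b c) = d (odotFun d s a b) c) ∧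
  (∀ a b c, d a (s b c) + s a (odotFun d s b c) = d b (s a c) + s b (odotFun d s a c))

/-- An NS-3-Lie algebra. -/
def IsNSThreeLieFun (t l : A → A → A → A) : Prop :=
  (∀ a b c, t a b c = - t b a c) ∧
  (∀ a b c, l a b c = - l b a c) ∧ (∀ a b c, l a b c = - l a c b) ∧
  (∀ a b c d e, t a b (t c d e) =
      t (ttotFun t l a b c) d e + t c (ttotFun t l a b d) e + t c d (t a b e)) ∧
  (∀ a b c d e, t (ttotFun t l a b c) d e =
      t a b (t c d e) + t b c (t a d e) + t c a (t b d e)) ∧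
  (∀ a b c d e, l a b (ttotFun t l c d e) + t a b (l c d e) =
      l (ttotFun t l a b c) d e + l c (ttotFun t l a b d) e + l c d (ttotFun t l a b e)
      + t d e (l a b c) + t e c (l a b d) + t c d (l a b e))

/-- An NS-Nambu-Poisson algebra. -/
def IsNSNambuPoissonFun (d s : A → A → A) (t l : A → A → A → A) : Prop :=
  IsNSCommFun d s ∧ IsNSThreeLieFun t l ∧
  (∀ a b c x, d (ttotFun t l a b c) x = t a b (d c x) - d c (t a b x)) ∧
  (∀ a b c x, t (odotFun d s a b) c x = d a (t b c x) + d b (t a c x)) ∧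
  (∀ a b c x, l a b (odotFun d s c x) + t a b (s c x) =
      s c (ttotFun t l a b x) + d c (l a b x) + s (ttotFun t l a b c) x + d x (l a b c))

/-- A `(φ,ψ)`-twisted O-operator. -/
def IsTwistedOFun (m : A → A → A) (br : A → A → A → A)
    (μ : A → V → V) (ρ : A → A → V → V)
    (φ : A → A → V) (ψ : A → A → A → V) (r : V → A) : Prop :=
  (∀ u v, m (r u) (r v) = r (μ (r u) v + μ (r v) u + φ (r u) (r v))) ∧
  (∀ u v w, br (r u) (r v) (r w) =
      r (ρ (r u) (r v) w + ρ (r v) (r w) u + ρ (r w) (r u) v + ψ (r u) (r v) (r w)))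

theorem statement1 {k : Type*} [Field k] [CharZero k]
    {A : Type*} [AddCommGroup A] [Module k A]
    {V : Type*} [AddCommGroup V] [Module k V]
    (m : A →ₗ[k] A →ₗ[k] A) (br : A →ₗ[k] A →ₗ[k] A →ₗ[k] A)
    (μ : A →ₗ[k] V →ₗ[k] V) (ρ : A →ₗ[k] A →ₗ[k] V →ₗ[k] V)
    (hA : IsNambuPoissonFun (fun a b => m a b) (fun a b c => br a b c))
    (hskew : ∀ a b v, ρ a b v = - ρ b a v) :
    IsNPRepFun (fun a b => m a b) (fun a b c => br a b c)
        (fun a v => μ a v) (fun a b v => ρ a b v) ↔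
      IsNambuPoissonFun
        (fun p q : A × V => (m p.1 q.1, μ p.1 q.2 + μ q.1 p.2))
        (fun p q r : A × V =>
          (br p.1 q.1 r.1, ρ p.1 q.1 r.2 + ρ q.1 r.1 p.2 + ρ r.1 p.1 q.2)) := by
  obtain ⟨⟨hcomm, hassoc⟩, ⟨hs1, hs2, hFI⟩, hLeib⟩ := hA
  constructor
  · rintro ⟨hμ, ⟨hρs, hR1, hR2⟩, h3, h4⟩
    dsimp only at hcomm hassoc hs1 hs2 hFI hLeib hμ hρs hR1 hR2 h3 h4
    refine ⟨⟨?_, ?_⟩, ⟨?_, ?_, ?_⟩, ?_⟩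
    · rintro ⟨a, u⟩ ⟨b, v⟩
      simp only [Prod.mk.injEq]
      exact ⟨hcomm a b, by abel⟩
    · rintro ⟨a, u⟩ ⟨b, v⟩ ⟨c, w⟩
      simp only [Prod.mk.injEq]
      refine ⟨hassoc a b c, ?_⟩
      simp only [map_add]
      have e1 := hμ a b w
      have e2 : μ c (μ a v) = μ a (μ c v) := by
        rw [← hμ c a v, hcomm c a, hμ a c v]
      have e3 : μ c (μ b u) = μ (m b c) u := by
        rw [← hμ c b u, hcomm c b]
      rw [e1, e2, e3]
      abel
    · rintro ⟨a, u⟩ ⟨b, v⟩ ⟨c, w⟩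
      simp only [Prod.neg_mk, Prod.mk.injEq]
      refine ⟨hs1 a b c, ?_⟩
      rw [hskew a b w, hskew b c u, hskew c a v]
      abel
    · rintro ⟨a, u⟩ ⟨b, v⟩ ⟨c, w⟩
      simp only [Prod.neg_mk, Prod.mk.injEq]
      refine ⟨hs2 a b c, ?_⟩
      rw [hskew a b w, hskew b c u, hskew c a v]
      abel
    · rintro ⟨a, u⟩ ⟨b, v⟩ ⟨c, w⟩ ⟨d, x⟩ ⟨e, y⟩
      simp only [Prod.mk_add_mk, Prod.mk.injEq]
      refine ⟨hFI a b c d e, ?_⟩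
      simp only [map_add]
      have hy : ρ a b (ρ c d y)
          = (ρ (br a b c) d y + ρ c (br a b d) y) + ρ c d (ρ a b y) :=
        sub_eq_iff_eq_add.mp (hR1 a b c d y)
      have hw : ρ a b (ρ d e w)
          = (ρ (br a b d) e w + ρ d (br a b e) w) + ρ d e (ρ a b w) :=
        sub_eq_iff_eq_add.mp (hR1 a b d e w)
      have hx : ρ a b (ρ e c x)
          = (ρ (br a b e) c x + ρ e (br a b c) x) + ρ e c (ρ a b x) :=
        sub_eq_iff_eq_add.mp (hR1 a b e c x)
      have hu : ρ b (br c d e) u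
          = ρ d e (ρ b c u) + ρ e c (ρ b d u) + ρ c d (ρ b e u) := by
        rw [hskew b (br c d e) u, hR2 c d e b u, hskew e b u, hskew c b u,
          hskew d b u, map_neg, map_neg, map_neg]
        abel
      have hv : ρ (br c d e) a v
          = ρ c d (ρ e a v) + ρ d e (ρ c a v) + ρ e c (ρ d a v) :=
        hR2 c d e a v
      rw [hy, hw, hx, hu, hv]
      abel
    · rintro ⟨a, u⟩ ⟨b, v⟩ ⟨c, w⟩ ⟨d, x⟩
      simp only [Prod.mk_add_mk, Prod.mk.injEq]
      refine ⟨hLeib a b c d, ?_⟩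
      simp only [map_add]
      have gx : ρ a b (μ c x) = μ (br a b c) x + μ c (ρ a b x) :=
        eq_add_of_sub_eq (h3 a b c x).symm
      have gw : ρ a b (μ d w) = μ (br a b d) w + μ d (ρ a b w) :=
        eq_add_of_sub_eq (h3 a b d w).symm
      have gu : ρ b (m c d) u = μ c (ρ b d u) + μ d (ρ b c u) := h4 b c d u
      have gv : ρ (m c d) a v = μ c (ρ d a v) + μ d (ρ c a v) := by
        rw [hskew (m c d) a v, h4 a c d v, hskew a d v, hskew a c v,
          map_neg, map_neg]
        abel
      rw [gx, gw, gu, gv]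
      abel
  · rintro ⟨⟨hc, ha⟩, ⟨hps1, hps2, hpFI⟩, hpL⟩
    have hμ : ∀ a b v, μ (m a b) v = μ a (μ b v) := by
      intro a b v
      have h := congrArg Prod.snd (ha (a, 0) (b, 0) ((0 : A), v))
      simp only [Prod.mk_add_mk, map_zero, LinearMap.zero_apply, LinearMap.map_zero,
        add_zero, zero_add] at h
      exact h
    have hR1 : ∀ a b c d v, ρ a b (ρ c d v) - ρ c d (ρ a b v)
        = ρ (br a b c) d v + ρ c (br a b d) v := by
      intro a b c d v
      have h := congrArg Prod.snd (hpFI (a, 0) (b, 0) (c, 0) (d, 0) ((0 : A), v))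
      simp only [Prod.mk_add_mk, map_zero, LinearMap.zero_apply, LinearMap.map_zero,
        add_zero, zero_add] at h
      rw [h]
      abel
    have hR2 : ∀ a b c d v, ρ (br a b c) d v
        = ρ a b (ρ c d v) + ρ b c (ρ a d v) + ρ c a (ρ b d v) := by
      intro a b c d v
      have h := congrArg Prod.snd (hpFI ((0 : A), v) (d, 0) (a, 0) (b, 0) (c, 0))
      simp only [Prod.mk_add_mk, map_zero, LinearMap.zero_apply, LinearMap.map_zero,
        add_zero, zero_add] at h
      rw [hskew d (br a b c) v, hskew d a v, hskew d b v, hskew d c v,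
        map_neg, map_neg, map_neg] at h
      rw [← neg_inj, h]
      abel
    have h3 : ∀ a b c v, μ (br a b c) v = ρ a b (μ c v) - μ c (ρ a b v) := by
      intro a b c v
      have h := congrArg Prod.snd (hpL (a, 0) (b, 0) (c, 0) ((0 : A), v))
      simp only [Prod.mk_add_mk, map_zero, LinearMap.zero_apply, LinearMap.map_zero,
        add_zero, zero_add] at h
      rw [h]
      abel
    have h4 : ∀ a b c v, ρ a (m b c) v = μ b (ρ a c v) + μ c (ρ a b v) := by
      intro a b c v
      have h := congrArg Prod.snd (hpL (a, 0) ((0 : A), v) (b, 0) (c, 0))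
      simp only [Prod.mk_add_mk, map_zero, LinearMap.zero_apply, LinearMap.map_zero,
        add_zero, zero_add] at h
      rw [hskew (m b c) a v, hskew b a v, hskew c a v, map_neg, map_neg] at h
      rw [← neg_inj]
      rw [h]
      abel
    exact ⟨hμ, ⟨hskew, hR1, hR2⟩, h3, h4⟩


end NPPaper
end

section
/- Let (A, ·, {,,}) be a Nambu-Poisson algebra over a field k of characteristic 0 and fix x₀ ∈ A. Define the bilinear bracket {a,b}_{x₀} := {x₀,a,b}. Then (A, ·, {,}_{x₀}) is a Poisson algebra. Moreover, if (V;μ,ρ) is a representation of the Nambu-Poisson algebra A and ρ_{x₀}: A→End(V) is defined by ρ_{x₀}(a)u := ρ(x₀,a)u, then (V;μ,ρ_{x₀}) is a representation of the Poisson algebra (A, ·, {,}_{x₀}). -/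
namespace NPPaper

variable {A V : Type*} [AddCommGroup A] [AddCommGroup V]

theorem statement2 {k : Type*} [Field k] [CharZero k]
    {A : Type*} [AddCommGroup A] [Module k A]
    {V : Type*} [AddCommGroup V] [Module k V]
    (m : A →ₗ[k] A →ₗ[k] A) (br : A →ₗ[k] A →ₗ[k] A →ₗ[k] A)
    (μ : A →ₗ[k] V →ₗ[k] V) (ρ : A →ₗ[k] A →ₗ[k] V →ₗ[k] V)
    (hA : IsNambuPoissonFun (fun a b => m a b) (fun a b c => br a b c))
    (x₀ : A) :
    IsPoissonFun (fun a b => m a b) (fun a b => br x₀ a b) ∧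
    (IsNPRepFun (fun a b => m a b) (fun a b c => br a b c)
        (fun a v => μ a v) (fun a b v => ρ a b v) →
      IsPoissonRepFun (fun a b => m a b) (fun a b => br x₀ a b)
        (fun a v => μ a v) (fun a v => ρ x₀ a v)) := by
  obtain ⟨hcomm, ⟨hs1, hs2, hfi⟩, hleib⟩ := hA
  have hzero : ∀ c : A, br x₀ x₀ c = 0 := by
    intro c
    have h := hs1 x₀ x₀ c
    have h2 : (2 : k) • (br x₀ x₀ c) = 0 := by
      rw [two_smul]
      simp only at h
      nth_rewrite 1 [h]
      abel
    rcases smul_eq_zero.mp h2 with h | h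
    · exact absurd h (by norm_num)
    · exact h
  have hzero2 : ∀ c : A, br x₀ c x₀ = 0 := by
    intro c
    have := hs2 x₀ c x₀
    simp only at this
    rw [this, hzero]; simp
  constructor
  · refine ⟨hcomm, ?_, ?_, ?_⟩
    · intro a b; exact hs2 x₀ a b
    · intro a b c
      have h := hfi x₀ a x₀ b c
      simp only at h
      beta_reduce
      rw [h, hzero2]
      simp
    · intro a b c; exact hleib x₀ a b c
  · rintro ⟨hmul, ⟨hr1, hr2, hr3⟩, hmix, hlr⟩
    refine ⟨hmul, ?_, ?_, ?_⟩
    · intro a b v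
      have h := hr2 x₀ a x₀ b v
      simp only at h
      rw [hzero2] at h
      simp only [map_zero, LinearMap.zero_apply, zero_add] at h
      beta_reduce
      rw [← h]
    · intro a b v; exact hmix x₀ a b v
    · intro a b v; exact hlr x₀ a b v


end NPPaper
end

section
/- Let (A, ·, {,,}) be a Nambu-Poisson algebra over a field k of characteristic 0 and (V;μ,ρ) a representation of it. Then a pair (φ,ψ) of a symmetric bilinear map φ: A×A→V and a skew-symmetric trilinear map ψ: A×A×A→V is a Nambu-Poisson 2-cocycle of A with coefficients in V if and only if A⊕V with operations (a,u)·_{⋉φ}(b,v) := (a·b, μ(a)v + μ(b)u + φ(a,b)) and {(a,u),(b,v),(c,w)}_{⋉ψ} := ({a,b,c}, ρ(a,b)w + ρ(b,c)u + ρ(c,a)v + ψ(a,b,c)) is a Nambu-Poisson algebra. -/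
namespace NPPaper

variable {A V : Type*} [AddCommGroup A] [AddCommGroup V]

theorem statement5 {k : Type*} [Field k] [CharZero k]
    {A : Type*} [AddCommGroup A] [Module k A]
    {V : Type*} [AddCommGroup V] [Module k V]
    (m : A →ₗ[k] A →ₗ[k] A) (br : A →ₗ[k] A →ₗ[k] A →ₗ[k] A)
    (μ : A →ₗ[k] V →ₗ[k] V) (ρ : A →ₗ[k] A →ₗ[k] V →ₗ[k] V)
    (φ : A →ₗ[k] A →ₗ[k] V) (ψ : A →ₗ[k] A →ₗ[k] A →ₗ[k] V)
    (hA : IsNambuPoissonFun (fun a b => m a b) (fun a b c => br a b c))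
    (hrep : IsNPRepFun (fun a b => m a b) (fun a b c => br a b c)
        (fun a v => μ a v) (fun a b v => ρ a b v))
    (hφsym : ∀ a b, φ a b = φ b a)
    (hψ₁ : ∀ a b c, ψ a b c = - ψ b a c)
    (hψ₂ : ∀ a b c, ψ a b c = - ψ a c b) :
    IsNP2CocycleFun (fun a b => m a b) (fun a b c => br a b c)
        (fun a v => μ a v) (fun a b v => ρ a b v)
        (fun a b => φ a b) (fun a b c => ψ a b c) ↔
      IsNambuPoissonFun
        (fun p q : A × V => (m p.1 q.1, μ p.1 q.2 + μ q.1 p.2 + φ p.1 q.1))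
        (fun p q r : A × V =>
          (br p.1 q.1 r.1,
            ρ p.1 q.1 r.2 + ρ q.1 r.1 p.2 + ρ r.1 p.1 q.2 + ψ p.1 q.1 r.1)) := by
  obtain ⟨⟨hcomm, hassoc⟩, ⟨hsk1, hsk2, hFI⟩, hLeib⟩ := hA
  obtain ⟨hμ, ⟨hρsk, hR1, hR2⟩, hM1, hM2⟩ := hrep
  have hcomm' : ∀ a b : A, m a b = m b a := hcomm
  have hassoc' : ∀ a b c : A, m (m a b) c = m a (m b c) := hassoc
  have hsk1' : ∀ a b c : A, br a b c = - br b a c := hsk1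
  have hsk2' : ∀ a b c : A, br a b c = - br a c b := hsk2
  have hFI' : ∀ a b c d e : A, br a b (br c d e) =
      br (br a b c) d e + br c (br a b d) e + br c d (br a b e) := hFI
  have hLeib' : ∀ a b c d : A, br a b (m c d) = m (br a b c) d + m c (br a b d) := hLeib
  have hμ' : ∀ (a b : A) (v : V), μ (m a b) v = μ a (μ b v) := hμ
  have hρsk' : ∀ (a b : A) (v : V), ρ a b v = - ρ b a v := hρsk
  have hR1' : ∀ (a b c d : A) (v : V), ρ a b (ρ c d v) - ρ c d (ρ a b v) =
      ρ (br a b c) d v + ρ c (br a b d) v := hR1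
  have hR2' : ∀ (a b c d : A) (v : V), ρ (br a b c) d v =
      ρ a b (ρ c d v) + ρ b c (ρ a d v) + ρ c a (ρ b d v) := hR2
  have hM1' : ∀ (a b c : A) (v : V), μ (br a b c) v = ρ a b (μ c v) - μ c (ρ a b v) := hM1
  have hM2' : ∀ (a b c : A) (v : V), ρ a (m b c) v = μ b (ρ a c v) + μ c (ρ a b v) := hM2
  constructor
  · rintro ⟨⟨-, hHar⟩, ⟨-, -, hψc⟩, hmix⟩
    have hHar' : ∀ a b c : A,
        μ a (φ b c) - φ (m a b) c + φ a (m b c) - μ c (φ a b) = 0 := hHar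
    have hψc' : ∀ a b c d e : A, ψ a b (br c d e) + ρ a b (ψ c d e) =
        ψ (br a b c) d e + ψ c (br a b d) e + ψ c d (br a b e)
        + ρ d e (ψ a b c) + ρ e c (ψ a b d) + ρ c d (ψ a b e) := hψc
    have hmix' : ∀ a b c d : A, ψ a b (m c d) + ρ a b (φ c d) =
        φ c (br a b d) + μ c (ψ a b d) + φ (br a b c) d + μ d (ψ a b c) := hmix
    refine ⟨⟨?_, ?_⟩, ⟨?_, ?_, ?_⟩, ?_⟩
    · rintro ⟨a, u⟩ ⟨b, v⟩
      simp only [Prod.mk.injEq]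
      refine ⟨hcomm' a b, ?_⟩
      rw [hφsym a b]; abel
    · rintro ⟨a, u⟩ ⟨b, v⟩ ⟨c, w⟩
      simp only [Prod.mk.injEq, map_add]
      refine ⟨hassoc' a b c, ?_⟩
      have h1 : μ (m a b) w = μ a (μ b w) := hμ' a b w
      have h2 : μ c (μ a v) = μ a (μ c v) := by
        rw [← hμ' c a v, ← hμ' a c v, hcomm' c a]
      have h3 : μ c (μ b u) = μ (m b c) u := by
        rw [hcomm' b c]; exact (hμ' c b u).symm
      have h6 := hHar' a b c
      rw [sub_eq_zero] at h6
      rw [h1, h2, h3, ← h6]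
      abel
    · rintro ⟨a, u⟩ ⟨b, v⟩ ⟨c, w⟩
      simp only [Prod.neg_mk, Prod.mk.injEq]
      refine ⟨hsk1' a b c, ?_⟩
      rw [hρsk' b a w, hρsk' a c v, hρsk' c b u,
        show ψ b a c = - ψ a b c by rw [hψ₁ a b c, neg_neg]]
      abel
    · rintro ⟨a, u⟩ ⟨b, v⟩ ⟨c, w⟩
      simp only [Prod.neg_mk, Prod.mk.injEq]
      refine ⟨hsk2' a b c, ?_⟩
      rw [hρsk' a c v, hρsk' c b u, hρsk' b a w,
        show ψ a c b = - ψ a b c by rw [hψ₂ a b c, neg_neg]]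
      abel
    · rintro ⟨a, u⟩ ⟨b, v⟩ ⟨c, w⟩ ⟨d, x⟩ ⟨e, y⟩
      simp only [Prod.mk_add_mk, Prod.mk.injEq, map_add]
      refine ⟨hFI' a b c d e, ?_⟩
      have h1 := sub_eq_iff_eq_add.mp (hR1' a b c d y)
      have h2 := sub_eq_iff_eq_add.mp (hR1' a b d e w)
      have h3 := sub_eq_iff_eq_add.mp (hR1' a b e c x)
      have h4 : ρ b (br c d e) u = ρ d e (ρ b c u) + ρ e c (ρ b d u) + ρ c d (ρ b e u) := by
        rw [hρsk' b (br c d e) u, hR2' c d e b u, hρsk' e b u, hρsk' c b u, hρsk' d b u,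
          map_neg, map_neg, map_neg]
        abel
      have h5 := hR2' c d e a v
      have h6 := eq_sub_of_add_eq' (hψc' a b c d e)
      rw [h1, h2, h3, h4, h5, h6]
      abel
    · rintro ⟨a, u⟩ ⟨b, v⟩ ⟨c, w⟩ ⟨d, x⟩
      simp only [Prod.mk_add_mk, Prod.mk.injEq, map_add]
      refine ⟨hLeib' a b c d, ?_⟩
      have g1 := sub_eq_iff_eq_add.mp (hM1' a b c x).symm
      have g2 := sub_eq_iff_eq_add.mp (hM1' a b d w).symm
      have g3 := hM2' b c d u
      have g4 : ρ (m c d) a v = μ d (ρ c a v) + μ c (ρ d a v) := by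
        rw [hρsk' (m c d) a v, hM2' a c d v, hρsk' a c v, hρsk' a d v, map_neg, map_neg]
        abel
      have g5 := eq_sub_of_add_eq (hmix' a b c d)
      rw [g1, g2, g3, g4, g5]
      abel
  · rintro ⟨⟨-, hassocP⟩, ⟨-, -, hFIP⟩, hLeibP⟩
    refine ⟨⟨hφsym, ?_⟩, ⟨hψ₁, hψ₂, ?_⟩, ?_⟩
    · intro a b c
      show μ a (φ b c) - φ (m a b) c + φ a (m b c) - μ c (φ a b) = 0
      have h := congrArg Prod.snd (hassocP (a, (0 : V)) (b, 0) (c, 0))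
      simp only [map_zero, zero_add, add_zero] at h
      have hx := eq_sub_of_add_eq h.symm
      rw [hx]
      abel
    · intro a b c d e
      show ψ a b (br c d e) + ρ a b (ψ c d e) =
        ψ (br a b c) d e + ψ c (br a b d) e + ψ c d (br a b e)
        + ρ d e (ψ a b c) + ρ e c (ψ a b d) + ρ c d (ψ a b e)
      have h := congrArg Prod.snd (hFIP (a, (0 : V)) (b, 0) (c, 0) (d, 0) (e, 0))
      simp only [map_zero, zero_add, add_zero, Prod.snd_add] at h
      abel_nf at h ⊢
      exact h
    · intro a b c d
      show ψ a b (m c d) + ρ a b (φ c d) =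
        φ c (br a b d) + μ c (ψ a b d) + φ (br a b c) d + μ d (ψ a b c)
      have h := congrArg Prod.snd (hLeibP (a, (0 : V)) (b, 0) (c, 0) (d, 0))
      simp only [map_zero, zero_add, add_zero, Prod.snd_add] at h
      abel_nf at h ⊢
      exact h

end NPPaper
end

section
/- Let (A, ·, {,,}) be a Nambu-Poisson algebra over a field k of characteristic 0, (V;μ,ρ) a representation of it, and (φ,ψ) a Nambu-Poisson 2-cocycle of A with coefficients in V. Fix x₀ ∈ A and define ψ_{x₀}(a,b) := ψ(x₀,a,b). Then the pair (φ, ψ_{x₀}) is a Poisson 2-cocycle of the Poisson algebra (A, ·, {,}_{x₀}) (where {a,b}_{x₀} := {x₀,a,b}) with coefficients in the representation (V;μ,ρ_{x₀}) (where ρ_{x₀}(a)u := ρ(x₀,a)u). -/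
namespace NPPaper

variable {A V : Type*} [AddCommGroup A] [AddCommGroup V]

theorem statement7 {k : Type*} [Field k] [CharZero k]
    {A : Type*} [AddCommGroup A] [Module k A]
    {V : Type*} [AddCommGroup V] [Module k V]
    (m : A →ₗ[k] A →ₗ[k] A) (br : A →ₗ[k] A →ₗ[k] A →ₗ[k] A)
    (μ : A →ₗ[k] V →ₗ[k] V) (ρ : A →ₗ[k] A →ₗ[k] V →ₗ[k] V)
    (φ : A →ₗ[k] A →ₗ[k] V) (ψ : A →ₗ[k] A →ₗ[k] A →ₗ[k] V)
    (hA : IsNambuPoissonFun (fun a b => m a b) (fun a b c => br a b c))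
    (hrep : IsNPRepFun (fun a b => m a b) (fun a b c => br a b c)
        (fun a v => μ a v) (fun a b v => ρ a b v))
    (hcoc : IsNP2CocycleFun (fun a b => m a b) (fun a b c => br a b c)
        (fun a v => μ a v) (fun a b v => ρ a b v)
        (fun a b => φ a b) (fun a b c => ψ a b c))
    (x₀ : A) :
    IsPoisson2CocycleFun (fun a b => m a b) (fun a b => br x₀ a b)
      (fun a v => μ a v) (fun a v => ρ x₀ a v)
      (fun a b => φ a b) (fun a b => ψ x₀ a b) := by
  obtain ⟨hφ, ⟨hψ1, hψ2, hψ3⟩, hmix⟩ := hcoc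
  obtain ⟨_, ⟨hbr1, hbr2, _⟩, _⟩ := hA
  obtain ⟨_, ⟨hρ1, _, _⟩, _, _⟩ := hrep
  have hψ1' : ∀ a b c, ψ a b c = - ψ b a c := hψ1
  have hψ2' : ∀ a b c, ψ a b c = - ψ a c b := hψ2
  have hbr1' : ∀ a b c, br a b c = - br b a c := hbr1
  have hbr2' : ∀ a b c, br a b c = - br a c b := hbr2
  have hρ1' : ∀ a b v, ρ a b v = - ρ b a v := hρ1
  have hψ3' : ∀ a b c d e, ψ a b (br c d e) + ρ a b (ψ c d e) =
      ψ (br a b c) d e + ψ c (br a b d) e + ψ c d (br a b e)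
      + ρ d e (ψ a b c) + ρ e c (ψ a b d) + ρ c d (ψ a b e) := hψ3
  have torsion : ∀ x : V, x = -x → x = 0 := by
    intro x hx
    have h2 : (2 : k) • x = 0 := by
      rw [two_smul]
      nth_rewrite 2 [hx]
      simp
    rcases smul_eq_zero.mp h2 with h | h
    · exact absurd h two_ne_zero
    · exact h
  have torsionA : ∀ x : A, x = -x → x = 0 := by
    intro x hx
    have h2 : (2 : k) • x = 0 := by
      rw [two_smul]
      nth_rewrite 2 [hx]
      simp
    rcases smul_eq_zero.mp h2 with h | h
    · exact absurd h two_ne_zero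
    · exact h
  refine ⟨hφ, ?_, ?_, ?_⟩
  · intro a b; exact hψ2 x₀ a b
  · intro a b c
    have hbz : br x₀ x₀ a = 0 := torsionA _ (hbr1' x₀ x₀ a)
    have hb0 : br x₀ a x₀ = 0 := by
      rw [hbr2' x₀ a x₀, hbz, neg_zero]
    have hψz : ψ x₀ x₀ a = 0 := torsion _ (hψ1' x₀ x₀ a)
    have hψ0 : ψ x₀ a x₀ = 0 := by
      rw [hψ2' x₀ a x₀, hψz, neg_zero]
    have h := hψ3' x₀ a x₀ b c
    simp only [hb0, hψ0, map_zero, LinearMap.zero_apply, zero_add, add_zero] at h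
    rw [hρ1' c x₀ (ψ x₀ a b), hψ2' x₀ (br x₀ a b) c] at h
    show ρ x₀ a (ψ x₀ b c) + ρ x₀ b (ψ x₀ c a) + ρ x₀ c (ψ x₀ a b)
      + ψ x₀ a (br x₀ b c) + ψ x₀ b (br x₀ c a) + ψ x₀ c (br x₀ a b) = 0
    rw [hψ2' x₀ c a, hbr2' x₀ c a, map_neg, map_neg]
    have h' := sub_eq_zero_of_eq h
    rw [← h']
    abel
  · intro a b c
    exact hmix x₀ a b c

end NPPaper
end

section
/- Let (A, ·, {,,}) be a Nambu-Poisson algebra over a field k of characteristic 0, φ₁: A×A→A a symmetric bilinear map, and ψ₁, ψ₂: A×A×A→A skew-symmetric trilinear maps. For t ∈ k define a·_t b := a·b + t φ₁(a,b) and {a,b,c}_t := {a,b,c} + t ψ₁(a,b,c) + t² ψ₂(a,b,c). Then (A, ·_t, {,,}_t) is a Nambu-Poisson algebra for every t ∈ k if and only if: (i) (φ₁,ψ₁) is a Nambu-Poisson 2-cocycle of A with coefficients in the adjoint representation (μ_ad(a)b = a·b, ρ_ad(a,b)c = {a,b,c}); (ii) (A, φ₁, ψ₂) is a Nambu-Poisson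 algebra; (iii) for all a,b,c,d,e ∈ A: ψ₂(a,b,{c,d,e}) + {a,b,ψ₂(c,d,e)} + ψ₁(a,b,ψ₁(c,d,e)) = ψ₂({a,b,c},d,e) + {ψ₂(a,b,c),d,e} + ψ₁(ψ₁(a,b,c),d,e) + ψ₂(c,{a,b,d},e) + {c,ψ₂(a,b,d),e} + ψ₁(c,ψ₁(a,b,d),e) + ψ₂(c,d,{a,b,e}) + {c,d,ψ₂(a,b,e)} + ψ₁(c,d,ψ₁(a,b,e)); and ψ₁(a,b,ψ₂(c,d,e)) + ψ₂(a,b,ψ₁(c,d,e)) = ψ₁(ψ₂(a,b,c),d,e) + ψ₂(ψ₁(a,b,c),d,e) + ψ₁(c,ψ₂(a,b,d),e) + ψ₂(c,ψ₁(a,b,d),e) + ψ₁(c,d,ψ₂(a,b,e)) + ψ₂(c,d,ψ₁(a,b,e)); and ψ₂(a,b,c·d) + ψ₁(a,b,φ₁(c,d)) = φ₁(c,ψ₁(a,b,d)) + c·ψ₂(a,b,d) + φ₁(ψ₁(a,b,c),d) + ψ₂(a,b,c)·d. -/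
namespace NPPaper

variable {A V : Type*} [AddCommGroup A] [AddCommGroup V]

section Vanish
variable {k M : Type*} [Field k] [CharZero k] [AddCommGroup M] [Module k M]

lemma vanish2 {c0 c1 c2 : M} (h : ∀ t : k, c0 + t • c1 + t ^ 2 • c2 = 0) :
    c0 = 0 ∧ c1 = 0 ∧ c2 = 0 := by
  have h0 := h 0; have h1 := h 1; have h2 := h (-1)
  refine ⟨?_, ?_, ?_⟩
  · linear_combination (norm := module) h0
  · linear_combination (norm := module) ((1:k)/2) • h1 + (-(1:k)/2) • h2
  · linear_combination (norm := module) (-(1:k)) • h0 + ((1:k)/2) • h1 + ((1:k)/2) • h2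

lemma vanish3 {c0 c1 c2 c3 : M} (h : ∀ t : k, c0 + t • c1 + t ^ 2 • c2 + t ^ 3 • c3 = 0) :
    c0 = 0 ∧ c1 = 0 ∧ c2 = 0 ∧ c3 = 0 := by
  have h0 := h 0; have h1 := h 1; have h2 := h (-1); have h3 := h 2
  refine ⟨?_, ?_, ?_, ?_⟩
  · linear_combination (norm := module) h0
  · linear_combination (norm := module) (-(1:k)/2) • h0 + (1:k) • h1 + (-(1:k)/3) • h2 + (-(1:k)/6) • h3
  · linear_combination (norm := module) (-(1:k)) • h0 + ((1:k)/2) • h1 + ((1:k)/2) • h2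
  · linear_combination (norm := module) ((1:k)/2) • h0 + (-(1:k)/2) • h1 + (-(1:k)/6) • h2 + ((1:k)/6) • h3

lemma vanish4 {c0 c1 c2 c3 c4 : M}
    (h : ∀ t : k, c0 + t • c1 + t ^ 2 • c2 + t ^ 3 • c3 + t ^ 4 • c4 = 0) :
    c0 = 0 ∧ c1 = 0 ∧ c2 = 0 ∧ c3 = 0 ∧ c4 = 0 := by
  have h0 := h 0; have h1 := h 1; have h2 := h (-1); have h3 := h 2; have h4 := h (-2)
  refine ⟨?_, ?_, ?_, ?_, ?_⟩
  · linear_combination (norm := module) h0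
  · linear_combination (norm := module) ((2:k)/3) • h1 + (-(2:k)/3) • h2 + (-(1:k)/12) • h3 + ((1:k)/12) • h4
  · linear_combination (norm := module) (-(5:k)/4) • h0 + ((2:k)/3) • h1 + ((2:k)/3) • h2 + (-(1:k)/24) • h3 + (-(1:k)/24) • h4
  · linear_combination (norm := module) (-(1:k)/6) • h1 + ((1:k)/6) • h2 + ((1:k)/12) • h3 + (-(1:k)/12) • h4
  · linear_combination (norm := module) ((1:k)/4) • h0 + (-(1:k)/6) • h1 + (-(1:k)/6) • h2 + ((1:k)/24) • h3 + ((1:k)/24) • h4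
end Vanish

set_option maxHeartbeats 1000000 in
theorem statement8 {k : Type*} [Field k] [CharZero k]
    {A : Type*} [AddCommGroup A] [Module k A]
    (m : A →ₗ[k] A →ₗ[k] A) (br : A →ₗ[k] A →ₗ[k] A →ₗ[k] A)
    (φ₁ : A →ₗ[k] A →ₗ[k] A) (ψ₁ ψ₂ : A →ₗ[k] A →ₗ[k] A →ₗ[k] A)
    (hA : IsNambuPoissonFun (fun a b => m a b) (fun a b c => br a b c))
    (hφsym : ∀ a b, φ₁ a b = φ₁ b a)
    (hψ₁a : ∀ a b c, ψ₁ a b c = - ψ₁ b a c) (hψ₁b : ∀ a b c, ψ₁ a b c = - ψ₁ a c b)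
    (hψ₂a : ∀ a b c, ψ₂ a b c = - ψ₂ b a c) (hψ₂b : ∀ a b c, ψ₂ a b c = - ψ₂ a c b) :
    (∀ t : k, IsNambuPoissonFun
        (fun a b => m a b + t • φ₁ a b)
        (fun a b c => br a b c + t • ψ₁ a b c + (t ^ 2) • ψ₂ a b c)) ↔
      (IsNP2CocycleFun (fun a b => m a b) (fun a b c => br a b c)
          (fun a b => m a b) (fun a b c => br a b c)
          (fun a b => φ₁ a b) (fun a b c => ψ₁ a b c)
        ∧ IsNambuPoissonFun (fun a b => φ₁ a b) (fun a b c => ψ₂ a b c)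
        ∧ (∀ a b c d e,
            ψ₂ a b (br c d e) + br a b (ψ₂ c d e) + ψ₁ a b (ψ₁ c d e) =
              ψ₂ (br a b c) d e + br (ψ₂ a b c) d e + ψ₁ (ψ₁ a b c) d e
              + ψ₂ c (br a b d) e + br c (ψ₂ a b d) e + ψ₁ c (ψ₁ a b d) e
              + ψ₂ c d (br a b e) + br c d (ψ₂ a b e) + ψ₁ c d (ψ₁ a b e))
        ∧ (∀ a b c d e,
            ψ₁ a b (ψ₂ c d e) + ψ₂ a b (ψ₁ c d e) =
              ψ₁ (ψ₂ a b c) d e + ψ₂ (ψ₁ a b c) d e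
              + ψ₁ c (ψ₂ a b d) e + ψ₂ c (ψ₁ a b d) e
              + ψ₁ c d (ψ₂ a b e) + ψ₂ c d (ψ₁ a b e))
        ∧ (∀ a b c d,
            ψ₂ a b (m c d) + ψ₁ a b (φ₁ c d) =
              φ₁ c (ψ₁ a b d) + m c (ψ₂ a b d) + φ₁ (ψ₁ a b c) d + m (ψ₂ a b c) d)) := by
  obtain ⟨⟨hmc0, hma0⟩, ⟨hb10, hb20, hFI0⟩, hLb0⟩ := hA
  have hmc : ∀ a b, m a b = m b a := hmc0
  have hma : ∀ a b c, m (m a b) c = m a (m b c) := hma0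
  have hb1 : ∀ a b c, br a b c = - br b a c := hb10
  have hb2 : ∀ a b c, br a b c = - br a c b := hb20
  have hFI : ∀ a b c d e, br a b (br c d e) =
      br (br a b c) d e + br c (br a b d) e + br c d (br a b e) := hFI0
  have hLb : ∀ a b c d, br a b (m c d) = m (br a b c) d + m c (br a b d) := hLb0
  have rot : ∀ x y z, br x y z = br y z x := fun x y z => by
    rw [hb1 x y z, hb2 y x z, neg_neg]
  constructor
  · intro H
    -- coefficients of associativity
    have KA : ∀ a b c : A,
        (m (m a b) c - m a (m b c) = 0) ∧
        (m (φ₁ a b) c + φ₁ (m a b) c - m a (φ₁ b c) - φ₁ a (m b c) = 0) ∧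
        (φ₁ (φ₁ a b) c - φ₁ a (φ₁ b c) = 0) := by
      intro a b c
      refine vanish2 (k := k) fun t => ?_
      have h := (H t).1.2 a b c
      simp only [map_add, map_smul, LinearMap.add_apply, LinearMap.smul_apply] at h
      linear_combination (norm := module) h
    -- coefficients of the fundamental identity
    have KF : ∀ a b c d e : A,
        (br a b (br c d e) - br (br a b c) d e - br c (br a b d) e - br c d (br a b e) = 0) ∧
        (ψ₁ a b (br c d e) + br a b (ψ₁ c d e)
          - ψ₁ (br a b c) d e - br (ψ₁ a b c) d e
          - ψ₁ c (br a b d) e - br c (ψ₁ a b d) e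
          - ψ₁ c d (br a b e) - br c d (ψ₁ a b e) = 0) ∧
        (ψ₂ a b (br c d e) + ψ₁ a b (ψ₁ c d e) + br a b (ψ₂ c d e)
          - ψ₂ (br a b c) d e - ψ₁ (ψ₁ a b c) d e - br (ψ₂ a b c) d e
          - ψ₂ c (br a b d) e - ψ₁ c (ψ₁ a b d) e - br c (ψ₂ a b d) e
          - ψ₂ c d (br a b e) - ψ₁ c d (ψ₁ a b e) - br c d (ψ₂ a b e) = 0) ∧
        (ψ₂ a b (ψ₁ c d e) + ψ₁ a b (ψ₂ c d e)
          - ψ₂ (ψ₁ a b c) d e - ψ₁ (ψ₂ a b c) d e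
          - ψ₂ c (ψ₁ a b d) e - ψ₁ c (ψ₂ a b d) e
          - ψ₂ c d (ψ₁ a b e) - ψ₁ c d (ψ₂ a b e) = 0) ∧
        (ψ₂ a b (ψ₂ c d e) - ψ₂ (ψ₂ a b c) d e - ψ₂ c (ψ₂ a b d) e - ψ₂ c d (ψ₂ a b e) = 0) := by
      intro a b c d e
      refine vanish4 (k := k) fun t => ?_
      have h := (H t).2.1.2.2 a b c d e
      simp only [map_add, map_smul, LinearMap.add_apply, LinearMap.smul_apply] at h
      linear_combination (norm := module) h
    -- coefficients of the Leibniz rule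
    have KL : ∀ a b c d : A,
        (br a b (m c d) - m (br a b c) d - m c (br a b d) = 0) ∧
        (ψ₁ a b (m c d) + br a b (φ₁ c d)
          - m (ψ₁ a b c) d - φ₁ (br a b c) d - m c (ψ₁ a b d) - φ₁ c (br a b d) = 0) ∧
        (ψ₂ a b (m c d) + ψ₁ a b (φ₁ c d)
          - m (ψ₂ a b c) d - φ₁ (ψ₁ a b c) d - m c (ψ₂ a b d) - φ₁ c (ψ₁ a b d) = 0) ∧
        (ψ₂ a b (φ₁ c d) - φ₁ (ψ₂ a b c) d - φ₁ c (ψ₂ a b d) = 0) := by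
      intro a b c d
      refine vanish3 (k := k) fun t => ?_
      have h := (H t).2.2 a b c d
      simp only [map_add, map_smul, LinearMap.add_apply, LinearMap.smul_apply] at h
      linear_combination (norm := module) h
    refine ⟨⟨⟨hφsym, ?_⟩, ⟨hψ₁a, hψ₁b, ?_⟩, ?_⟩,
      ⟨⟨hφsym, ?_⟩, ⟨hψ₂a, hψ₂b, ?_⟩, ?_⟩, ?_, ?_, ?_⟩
    · -- Harrison cocycle identity
      intro a b c
      linear_combination (norm := module) (-(1:k)) • (KA a b c).2.1 + hmc (φ₁ a b) c
    · -- 3-Lie 2-cocycle identity for ψ₁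
      intro a b c d e
      linear_combination (norm := module) (KF a b c d e).2.1
        + rot (ψ₁ a b c) d e + rot c (ψ₁ a b d) e + rot (ψ₁ a b d) e c
    · -- mixed cocycle identity
      intro a b c d
      linear_combination (norm := module) (KL a b c d).2.1 + hmc (ψ₁ a b c) d
    · -- associativity of φ₁
      intro a b c
      linear_combination (norm := module) (KA a b c).2.2
    · -- fundamental identity for ψ₂
      intro a b c d e
      linear_combination (norm := module) (KF a b c d e).2.2.2.2
    · -- Leibniz for (φ₁, ψ₂)
      intro a b c d
      linear_combination (norm := module) (KL a b c d).2.2.2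
    · -- condition (iii) first
      intro a b c d e
      linear_combination (norm := module) (KF a b c d e).2.2.1
    · -- condition (iii) second
      intro a b c d e
      linear_combination (norm := module) (KF a b c d e).2.2.2.1
    · -- condition (v)
      intro a b c d
      linear_combination (norm := module) (KL a b c d).2.2.1
  · rintro ⟨⟨⟨hφs, Hhar⟩, ⟨_, _, Hco⟩, Hmx⟩,
      ⟨⟨hφc0, hφa0⟩, ⟨_, _, hFI20⟩, hLb20⟩, H2, H3, H5⟩ t
    have Hhar' : ∀ a b c : A, m a (φ₁ b c) - φ₁ (m a b) c + φ₁ a (m b c) - m c (φ₁ a b) = 0 := Hhar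
    have Hco' : ∀ a b c d e : A, ψ₁ a b (br c d e) + br a b (ψ₁ c d e) =
        ψ₁ (br a b c) d e + ψ₁ c (br a b d) e + ψ₁ c d (br a b e)
        + br d e (ψ₁ a b c) + br e c (ψ₁ a b d) + br c d (ψ₁ a b e) := Hco
    have Hmx' : ∀ a b c d : A, ψ₁ a b (m c d) + br a b (φ₁ c d) =
        φ₁ c (br a b d) + m c (ψ₁ a b d) + φ₁ (br a b c) d + m d (ψ₁ a b c) := Hmx
    have hφa : ∀ a b c : A, φ₁ (φ₁ a b) c = φ₁ a (φ₁ b c) := hφa0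
    have hFI2 : ∀ a b c d e : A, ψ₂ a b (ψ₂ c d e) =
        ψ₂ (ψ₂ a b c) d e + ψ₂ c (ψ₂ a b d) e + ψ₂ c d (ψ₂ a b e) := hFI20
    have hLb2 : ∀ a b c d : A, ψ₂ a b (φ₁ c d) = φ₁ (ψ₂ a b c) d + φ₁ c (ψ₂ a b d) := hLb20
    have H2' : ∀ a b c d e : A,
        ψ₂ a b (br c d e) + br a b (ψ₂ c d e) + ψ₁ a b (ψ₁ c d e) =
          ψ₂ (br a b c) d e + br (ψ₂ a b c) d e + ψ₁ (ψ₁ a b c) d e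
          + ψ₂ c (br a b d) e + br c (ψ₂ a b d) e + ψ₁ c (ψ₁ a b d) e
          + ψ₂ c d (br a b e) + br c d (ψ₂ a b e) + ψ₁ c d (ψ₁ a b e) := H2
    have H3' : ∀ a b c d e : A,
        ψ₁ a b (ψ₂ c d e) + ψ₂ a b (ψ₁ c d e) =
          ψ₁ (ψ₂ a b c) d e + ψ₂ (ψ₁ a b c) d e
          + ψ₁ c (ψ₂ a b d) e + ψ₂ c (ψ₁ a b d) e
          + ψ₁ c d (ψ₂ a b e) + ψ₂ c d (ψ₁ a b e) := H3
    have H5' : ∀ a b c d : A,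
        ψ₂ a b (m c d) + ψ₁ a b (φ₁ c d) =
          φ₁ c (ψ₁ a b d) + m c (ψ₂ a b d) + φ₁ (ψ₁ a b c) d + m (ψ₂ a b c) d := H5
    refine ⟨⟨?_, ?_⟩, ⟨?_, ?_, ?_⟩, ?_⟩
    · -- commutativity
      intro a b
      simp only []
      linear_combination (norm := module) hmc a b + t • hφs a b
    · -- associativity
      intro a b c
      simp only [map_add, map_smul, LinearMap.add_apply, LinearMap.smul_apply]
      linear_combination (norm := module) hma a b c + (-t) • Hhar' a b c
        + t • hmc (φ₁ a b) c + (t ^ 2) • hφa a b c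
    · -- skew 1
      intro a b c
      simp only []
      linear_combination (norm := module) hb1 a b c + t • hψ₁a a b c + (t ^ 2) • hψ₂a a b c
    · -- skew 2
      intro a b c
      simp only []
      linear_combination (norm := module) hb2 a b c + t • hψ₁b a b c + (t ^ 2) • hψ₂b a b c
    · -- fundamental identity
      intro a b c d e
      simp only [map_add, map_smul, LinearMap.add_apply, LinearMap.smul_apply]
      linear_combination (norm := module) hFI a b c d e
        + t • Hco' a b c d e
        + (-t) • rot (ψ₁ a b c) d e + (-t) • rot c (ψ₁ a b d) e + (-t) • rot (ψ₁ a b d) e c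
        + (t ^ 2) • H2' a b c d e + (t ^ 3) • H3' a b c d e + (t ^ 4) • hFI2 a b c d e
    · -- Leibniz rule
      intro a b c d
      simp only [map_add, map_smul, LinearMap.add_apply, LinearMap.smul_apply]
      linear_combination (norm := module) hLb a b c d
        + t • Hmx' a b c d + t • hmc d (ψ₁ a b c)
        + (t ^ 2) • H5' a b c d + (t ^ 3) • hLb2 a b c d

end NPPaper
end

section
/- Let (A, ·, {,,}) be a Nambu-Poisson algebra over a field k of characteristic 0 and N: A→A a Nijenhuis operator on it. Then for every integer k ≥ 0, the power N^k: A→A is also a Nijenhuis operator on the Nambu-Poisson algebra A. -/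
namespace NPPaper

variable {A V : Type*} [AddCommGroup A] [AddCommGroup V]

private theorem aux_pow_succ_apply {k A : Type*} [Field k] [AddCommGroup A] [Module k A]
    (N : Module.End k A) (n : ℕ) (x : A) : (N ^ (n+1)) x = N ((N ^ n) x) := by
  rw [pow_succ']; rfl

private theorem aux_pow_comm_apply {k A : Type*} [Field k] [AddCommGroup A] [Module k A]
    (N : Module.End k A) (n : ℕ) (x : A) : (N ^ n) (N x) = N ((N ^ n) x) := by
  calc (N ^ n) (N x) = (N ^ n * N) x := rfl
    _ = (N ^ (n+1)) x := by rw [pow_succ]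
    _ = (N * N ^ n) x := by rw [pow_succ']
    _ = N ((N ^ n) x) := rfl

private theorem aux_key2 {k A : Type*} [Field k] [AddCommGroup A] [Module k A]
    (m : A → A → A) (N : Module.End k A)
    (hN : ∀ a b, m (N a) (N b) = N (m (N a) b + m a (N b) - N (m a b))) :
    ∀ p q : ℕ, ∀ a b : A, m ((N ^ p) a) ((N ^ q) b)
      = (N ^ q) (m ((N ^ p) a) b) + (N ^ p) (m a ((N ^ q) b))
        - (N ^ p) ((N ^ q) (m a b)) := by
  have hsucc := aux_pow_succ_apply N
  have hcomm := aux_pow_comm_apply N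
  intro p
  induction p with
  | zero => intro q a b; simp only [pow_zero, Module.End.one_apply]; abel
  | succ p ihp =>
    intro q
    induction q with
    | zero => intro a b; simp only [pow_zero, Module.End.one_apply]; abel
    | succ q ihq =>
      intro a b
      have e1 := ihq a b
      have e2 := ihp (q+1) a b
      have e3 := ihp q a b
      have h := hN ((N ^ p) a) ((N ^ q) b)
      simp only [hsucc] at e1 e2 ⊢
      rw [e1, e2, e3] at h
      simp only [map_add, map_sub, hcomm] at h ⊢
      rw [h]
      abel

private theorem aux_key3 {k A : Type*} [Field k] [AddCommGroup A] [Module k A]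
    (t : A → A → A → A) (N : Module.End k A)
    (hN : ∀ a b c, t (N a) (N b) (N c) =
      N (t (N a) (N b) c + t (N a) b (N c) + t a (N b) (N c)
        - N (t (N a) b c + t a (N b) c + t a b (N c) - N (t a b c)))) :
    ∀ p q r : ℕ, ∀ a b c : A, t ((N ^ p) a) ((N ^ q) b) ((N ^ r) c)
      = (N ^ r) (t ((N ^ p) a) ((N ^ q) b) c)
        + (N ^ q) (t ((N ^ p) a) b ((N ^ r) c))
        + (N ^ p) (t a ((N ^ q) b) ((N ^ r) c))
        - (N ^ q) ((N ^ r) (t ((N ^ p) a) b c))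
        - (N ^ p) ((N ^ r) (t a ((N ^ q) b) c))
        - (N ^ p) ((N ^ q) (t a b ((N ^ r) c)))
        + (N ^ p) ((N ^ q) ((N ^ r) (t a b c))) := by
  have hsucc := aux_pow_succ_apply N
  have hcomm := aux_pow_comm_apply N
  intro p
  induction p with
  | zero => intro q r a b c; simp only [pow_zero, Module.End.one_apply]; abel
  | succ p ihp =>
    intro q
    induction q with
    | zero => intro r a b c; simp only [pow_zero, Module.End.one_apply]; abel
    | succ q ihq =>
      intro r
      induction r with
      | zero => intro a b c; simp only [pow_zero, Module.End.one_apply]; abel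
      | succ r ihr =>
        intro a b c
        have e1 := ihr a b c
        have e2 := ihq (r+1) a b c
        have e3 := ihp (q+1) (r+1) a b c
        have e4 := ihq r a b c
        have e5 := ihp (q+1) r a b c
        have e6 := ihp q (r+1) a b c
        have e7 := ihp q r a b c
        have h := hN ((N ^ p) a) ((N ^ q) b) ((N ^ r) c)
        simp only [hsucc] at e1 e2 e3 e4 e5 e6 ⊢
        rw [e1, e2, e3, e4, e5, e6, e7] at h
        simp only [map_add, map_sub, hcomm] at h ⊢
        rw [h]
        abel

theorem statement9 {k : Type*} [Field k] [CharZero k]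
    {A : Type*} [AddCommGroup A] [Module k A]
    (m : A →ₗ[k] A →ₗ[k] A) (br : A →ₗ[k] A →ₗ[k] A →ₗ[k] A)
    (hA : IsNambuPoissonFun (fun a b => m a b) (fun a b c => br a b c))
    (N : Module.End k A)
    (hN : IsNijenhuisFun (fun a b => m a b) (fun a b c => br a b c) (fun a => N a)) :
    ∀ n : ℕ, IsNijenhuisFun (fun a b => m a b) (fun a b c => br a b c)
      (fun a => (N ^ n) a) := by
  intro n
  obtain ⟨hNm, hNbr⟩ := hN
  have hNm' : ∀ a b : A, m (N a) (N b) = N (m (N a) b + m a (N b) - N (m a b)) := hNm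
  have hNbr' : ∀ a b c : A, br (N a) (N b) (N c) =
      N (br (N a) (N b) c + br (N a) b (N c) + br a (N b) (N c)
        - N (br (N a) b c + br a (N b) c + br a b (N c) - N (br a b c))) := hNbr
  refine ⟨fun a b => ?_, fun a b c => ?_⟩
  · show m ((N ^ n) a) ((N ^ n) b)
      = (N ^ n) (m ((N ^ n) a) b + m a ((N ^ n) b) - (N ^ n) (m a b))
    rw [aux_key2 (fun a b => m a b) N hNm' n n a b]
    simp only [map_add, map_sub]
  · show br ((N ^ n) a) ((N ^ n) b) ((N ^ n) c)
      = (N ^ n) (br ((N ^ n) a) ((N ^ n) b) c + br ((N ^ n) a) b ((N ^ n) c)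
          + br a ((N ^ n) b) ((N ^ n) c)
        - (N ^ n) (br ((N ^ n) a) b c + br a ((N ^ n) b) c + br a b ((N ^ n) c)
          - (N ^ n) (br a b c)))
    rw [aux_key3 (fun a b c => br a b c) N hNbr' n n n a b c]
    simp only [map_add, map_sub]
    abel


end NPPaper
end

section
/- Let (A, ⋄, *) be an NS-commutative algebra over a field k of characteristic 0 and set a⊙b := a⋄b + b⋄a + a*b. Then (A, ⊙) is a commutative associative algebra; the map μ_⋄: A→End(A), μ_⋄(a)b := a⋄b, makes (A;μ_⋄) a representation of (A,⊙) (i.e. μ_⋄(a⊙b) = μ_⋄(a)μ_⋄(b)); and the bilinear map φ_*(a,b) := a*b is a Harrison 2-cocycle of (A,⊙) with coefficients in (A;μ_⋄). -/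
namespace NPPaper

variable {A V : Type*} [AddCommGroup A] [AddCommGroup V]

theorem statement11 {k : Type*} [Field k] [CharZero k]
    {A : Type*} [AddCommGroup A] [Module k A]
    (d s : A →ₗ[k] A →ₗ[k] A)
    (h : IsNSCommFun (fun a b => d a b) (fun a b => s a b)) :
    IsCommAssocFun (odotFun (fun a b => d a b) (fun a b => s a b))
      ∧ (∀ a b c, d (odotFun (fun a b => d a b) (fun a b => s a b) a b) c = d a (d b c))
      ∧ IsHarrison2CocycleFun (odotFun (fun a b => d a b) (fun a b => s a b))
          (fun a v => d a v) (fun a b => s a b) := by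
  obtain ⟨hs0, h2, h3⟩ := h
  have hs : ∀ a b : A, s a b = s b a := fun a b => hs0 a b
  have h2' : ∀ a b c : A, d a (d b c) = d (d a b + d b a + s a b) c := by
    intro a b c; simpa [odotFun] using h2 a b c
  have h3' : ∀ a b c : A, d a (s b c) + s a (d b c + d c b + s b c)
      = d b (s a c) + s b (d a c + d c a + s a c) := by
    intro a b c; simpa [odotFun] using h3 a b c
  have E1 : ∀ a b c : A, d a (d c b) = d c (d a b) := by
    intro a b c
    rw [h2' a c b, h2' c a b, hs a c]
    congr 1
    abel
  have H : ∀ a b c : A, d a (s b c) + s a (d b c + d c b + s b c)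
      = d c (s a b) + s c (d a b + d b a + s a b) := by
    intro a b c
    rw [h3' a b c, hs a c, show d a c + d c a + s c a = d c a + d a c + s c a by abel,
      h3' b c a, hs b a]
    congr 1
    abel
  refine ⟨⟨fun a b => by simp only [odotFun]; rw [hs a b]; abel, ?_⟩, ?_, fun a b => hs a b, ?_⟩
  · intro a b c
    simp only [odotFun]
    rw [← h2' a b c, ← h2' b c a]
    simp only [map_add, LinearMap.add_apply]
    rw [E1 a b c, E1 b a c]
    have h4 := H a b c
    rw [hs c (d a b + d b a + s a b)] at h4
    simp only [map_add, LinearMap.add_apply] at h4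
    linear_combination (norm := abel) -h4
  · intro a b c
    simp only [odotFun]
    rw [h2' a b c]
  · intro a b c
    simp only [odotFun]
    have h4 := H a b c
    rw [hs c (d a b + d b a + s a b)] at h4
    simp only [map_add, LinearMap.add_apply] at h4
    simp only [map_add, LinearMap.add_apply]
    linear_combination (norm := abel) h4

end NPPaper
end

section
/- Let (A, [,,], ⟦,,⟧) be an NS-3-Lie algebra over a field k of characteristic 0 and set {{a,b,c}} := [a,b,c] + [b,c,a] + [c,a,b] + ⟦a,b,c⟧. Then (A, {{,,}}) is a 3-Lie algebra; the skew-symmetric bilinear map ρ(a,b)c := [a,b,c] makes (A;ρ) a representation of the 3-Lie algebra (A, {{,,}}); and the map ψ(a,b,c) := ⟦a,b,c⟧ is a 2-cocycle of (A, {{,,}}) with coefficients in (A;ρ). -/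
namespace NPPaper

variable {A V : Type*} [AddCommGroup A] [AddCommGroup V]

theorem statement12 {k : Type*} [Field k] [CharZero k]
    {A : Type*} [AddCommGroup A] [Module k A]
    (t l : A →ₗ[k] A →ₗ[k] A →ₗ[k] A)
    (h : IsNSThreeLieFun (fun a b c => t a b c) (fun a b c => l a b c)) :
    IsThreeLieFun (ttotFun (fun a b c => t a b c) (fun a b c => l a b c))
      ∧ IsThreeLieRepFun (ttotFun (fun a b c => t a b c) (fun a b c => l a b c))
          (fun a b v => t a b v)
      ∧ IsThreeLie2CocycleFun (ttotFun (fun a b c => t a b c) (fun a b c => l a b c))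
          (fun a b v => t a b v) (fun a b c => l a b c) := by
  obtain ⟨h1, h2, h3, h4, h5, h6⟩ := h
  simp only at h1 h2 h3 h4 h5 h6
  refine ⟨⟨?_, ?_, ?_⟩, ⟨?_, ?_, ?_⟩, ⟨?_, ?_, ?_⟩⟩
  · intro a b c
    simp only [ttotFun]
    rw [h1 a b c, h1 b c a, h1 c a b, h2 a b c]
    abel
  · intro a b c
    simp only [ttotFun]
    rw [h1 a b c, h1 b c a, h1 c a b, h3 a b c]
    rw [h1 b a c, h1 c b a, h1 a c b]
    abel
  · intro a b c d e
    have e1 := h4 a b c d e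
    have e2 := h4 a b d e c
    have e3 := h4 a b e c d
    have e4 := h6 a b c d e
    have e5 := h5 c d e a b
    have e6 := h5 c d e b a
    have s0 := h1 b (t c d e + t d e c + t e c d + l c d e) a
    have s1 : t c d (t e b a) = - t c d (t b e a) := by rw [h1 e b a, map_neg]
    have s2 : t d e (t c b a) = - t d e (t b c a) := by rw [h1 c b a, map_neg]
    have s3 : t e c (t d b a) = - t e c (t b d a) := by rw [h1 d b a, map_neg]
    simp only [ttotFun, map_add, LinearMap.add_apply, map_neg, LinearMap.neg_apply]
      at e1 e2 e3 e4 e5 e6 s0 ⊢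
    linear_combination (norm := abel) e1 + e2 + e3 + e4 + e5 - e6 + s0 - s1 - s2 - s3
  · exact h1
  · intro a b c d v
    simp only [ttotFun]
    have e1 := h4 a b c d v
    simp only [ttotFun] at e1
    linear_combination (norm := abel) e1
  · exact h5
  · exact h2
  · exact h3
  · exact h6

end NPPaper
end

section
/- Let (A, ⋄, *, [,,], ⟦,,⟧) be an NS-Nambu-Poisson algebra over a field k of characteristic 0. Then (A, ⊙, {{,,}}) is a Nambu-Poisson algebra, where a⊙b := a⋄b + b⋄a + a*b and {{a,b,c}} := [a,b,c] + [b,c,a] + [c,a,b] + ⟦a,b,c⟧ (the subadjacent Nambu-Poisson algebra). -/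
namespace NPPaper

variable {A V : Type*} [AddCommGroup A] [AddCommGroup V]

theorem statement13 {k : Type*} [Field k] [CharZero k]
    {A : Type*} [AddCommGroup A] [Module k A]
    (d s : A →ₗ[k] A →ₗ[k] A) (t l : A →ₗ[k] A →ₗ[k] A →ₗ[k] A)
    (h : IsNSNambuPoissonFun (fun a b => d a b) (fun a b => s a b)
        (fun a b c => t a b c) (fun a b c => l a b c)) :
    IsNambuPoissonFun
      (odotFun (fun a b => d a b) (fun a b => s a b))
      (ttotFun (fun a b c => t a b c) (fun a b c => l a b c)) := by
  obtain ⟨⟨hs, hd2, hd3⟩, ⟨h1, h2, h3, h4, h5, h6⟩, hc1, hc2, hc3⟩ := h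
  simp only [odotFun, ttotFun, map_add, map_neg, map_sub, LinearMap.add_apply,
    LinearMap.neg_apply, LinearMap.sub_apply] at hs h1 h2 h3 hd2 hd3 h4 h5 h6 hc1 hc2 hc3
  refine ⟨⟨?_, ?_⟩, ⟨?_, ?_, ?_⟩, ?_⟩
  · -- commutativity
    intro a b
    simp only [odotFun]
    rw [hs a b]; abel
  · -- associativity
    intro a b c
    simp only [odotFun, map_add, LinearMap.add_apply]
    have cgA : d c (s a b) = d c (s b a) := by rw [hs a b]
    have cgB : s c (s a b) = s c (s b a) := by rw [hs a b]
    have cgE : d (s a c) b = d (s c a) b := by rw [hs a c]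
    have cgF : d b (s a c) = d b (s c a) := by rw [hs a c]
    have cgG : s b (s a c) = s b (s c a) := by rw [hs a c]
    have cgI : d (s b c) a = d (s c b) a := by rw [hs b c]
    linear_combination (norm := abel) -hd2 a b c - hd3 a b c - hd2 a c b - hd3 b c a
      + hd2 c a b + hd2 c b a + cgA + cgB + hs (d a b) c + hs (s a b) c
      - cgE - cgF - cgG + hs (d b a) c - cgI
  · -- skew in first two arguments
    intro a b c
    simp only [ttotFun]
    linear_combination (norm := abel) h1 a b c + h2 a b c + h1 a c b + h1 b c a
  · -- skew in last two arguments
    intro a b c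
    simp only [ttotFun]
    linear_combination (norm := abel) h1 a b c + h3 a b c + h1 a c b + h1 b c a
  · -- fundamental identity
    intro a b c z e
    simp only [ttotFun, map_add, LinearMap.add_apply]
    have E1 := h1 b (t c z e + t z e c + t e c z + l c z e) a
    simp only [map_add, LinearMap.add_apply] at E1
    have E2 : t c z (t b e a) = - t c z (t e b a) := by rw [h1 b e a, map_neg]
    have E3 : t z e (t b c a) = - t z e (t c b a) := by rw [h1 b c a, map_neg]
    have E4 : t e c (t b z a) = - t e c (t z b a) := by rw [h1 b z a, map_neg]
    linear_combination (norm := abel) h4 a b c z e + h4 a b z e c + h4 a b e c z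
      + h6 a b c z e + h5 c z e a b - h5 c z e b a + E1 - E2 - E3 - E4
  · -- Leibniz rule
    intro a b c x
    simp only [odotFun, ttotFun, map_add, LinearMap.add_apply]
    have F1 := h1 b (d c x + d x c + s c x) a
    simp only [map_add, LinearMap.add_apply] at F1
    have F2 : d c (t b x a) = - d c (t x b a) := by rw [h1 b x a, map_neg]
    have F3 : d x (t b c a) = - d x (t c b a) := by rw [h1 b c a, map_neg]
    linear_combination (norm := abel) -hc1 a b c x - hc1 a b x c + hc2 c x a b
      - hc2 c x b a + hc3 a b c x + F1 - F2 - F3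


end NPPaper
end

section
/- Let (A, ·, {,,}) be a Nambu-Poisson algebra over a field k of characteristic 0 and N: A→A a Nijenhuis operator on it. Define a⋄_N b := N(a)·b, a*_N b := −N(a·b), [a,b,c]_N := {N(a),N(b),c}, and ⟦a,b,c⟧_N := −N({N(a),b,c} + {a,N(b),c} + {a,b,N(c)} − N({a,b,c})). Then (A, ⋄_N, *_N, [,,]_N, ⟦,,⟧_N) is an NS-Nambu-Poisson algebra, and its subadjacent Nambu-Poisson structure (a⊙b := a⋄_N b + b⋄_N a + a*_N b, {{a,b,c}} := [a,b,c]_N + [b,c,a]_N + [c,a,b]_N + ⟦a,b,c⟧_N) coincides with the deformed Nambu-Poisson structure a·_N b := N(a)·b + a·N(b) − N(a·b), {a,b,c}_N := {N(a),N(b),c} + {N(a),b,N(c)} + {a,N(b),N(c)} − N({N(a),b,c} + {a,N(b),c} + {a,b,N(c)} − N({a,b,c})). -/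
namespace NPPaper

variable {A V : Type*} [AddCommGroup A] [AddCommGroup V]

set_option maxHeartbeats 4000000
set_option maxRecDepth 1000000

theorem statement15 {k : Type*} [Field k] [CharZero k]
    {A : Type*} [AddCommGroup A] [Module k A]
    (m : A →ₗ[k] A →ₗ[k] A) (br : A →ₗ[k] A →ₗ[k] A →ₗ[k] A)
    (hA : IsNambuPoissonFun (fun a b => m a b) (fun a b c => br a b c))
    (N : A →ₗ[k] A)
    (hN : IsNijenhuisFun (fun a b => m a b) (fun a b c => br a b c) (fun a => N a)) :
    IsNSNambuPoissonFun
        (fun a b => m (N a) b) (fun a b => - N (m a b))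
        (fun a b c => br (N a) (N b) c)
        (fun a b c => - N (br (N a) b c + br a (N b) c + br a b (N c) - N (br a b c)))
      ∧ (∀ a b, odotFun (fun a b => m (N a) b) (fun a b => - N (m a b)) a b
          = m (N a) b + m a (N b) - N (m a b))
      ∧ (∀ a b c, ttotFun (fun a b c => br (N a) (N b) c)
            (fun a b c => - N (br (N a) b c + br a (N b) c + br a b (N c) - N (br a b c)))
            a b c
          = br (N a) (N b) c + br (N a) b (N c) + br a (N b) (N c)
            - N (br (N a) b c + br a (N b) c + br a b (N c) - N (br a b c))) := by
  have hc : ∀ a b : A, m a b = m b a := hA.1.1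
  have ha : ∀ a b c : A, m (m a b) c = m a (m b c) := hA.1.2
  have h1 : ∀ a b c : A, br a b c = - br b a c := hA.2.1.1
  have h2 : ∀ a b c : A, br a b c = - br a c b := hA.2.1.2.1
  have hF : ∀ a b c d e : A, br a b (br c d e) = br (br a b c) d e + br c (br a b d) e + br c d (br a b e) := hA.2.1.2.2
  have hL : ∀ a b c d : A, br a b (m c d) = m (br a b c) d + m c (br a b d) := hA.2.2
  have hNm : ∀ u v : A, m (N u) (N v) = N (m (N u) v) + N (m u (N v)) - N (N (m u v)) := by
    intro u v
    linear_combination (norm := ((try simp only [odotFun, ttotFun, map_add, map_sub, map_neg, LinearMap.add_apply, LinearMap.sub_apply, LinearMap.neg_apply]); (try abel))) (hN.1 u v)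
  have hNb : ∀ u v w : A, br (N u) (N v) (N w) = N (br (N u) (N v) w) + N (br (N u) v (N w)) + N (br u (N v) (N w)) - N (N (br (N u) v w)) - N (N (br u (N v) w)) - N (N (br u v (N w))) + N (N (N (br u v w))) := by
    intro u v w
    linear_combination (norm := ((try simp only [odotFun, ttotFun, map_add, map_sub, map_neg, LinearMap.add_apply, LinearMap.sub_apply, LinearMap.neg_apply]); (try abel))) (hN.2 u v w)
  refine ⟨⟨⟨?_, ?_, ?_⟩, ⟨?_, ?_, ?_, ?_, ?_, ?_⟩, ?_, ?_, ?_⟩, ?_, ?_⟩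
  · -- G1
    intro a b
    linear_combination (norm := ((try simp only [odotFun, ttotFun, map_add, map_sub, map_neg, LinearMap.add_apply, LinearMap.sub_apply, LinearMap.neg_apply]); (try abel))) (congrArg (fun zz => N (zz)) (hc (b) (a)))
  · -- G2
    intro a b c
    linear_combination (norm := ((try simp only [odotFun, ttotFun, map_add, map_sub, map_neg, LinearMap.add_apply, LinearMap.sub_apply, LinearMap.neg_apply]); (try abel))) (congrArg (fun zz => m (N (a)) (zz)) (hc (N (b)) (c))) - (ha (N (a)) (c) (N (b))) + (congrArg (fun zz => m (zz) (N (b))) (hc (N (a)) (c))) + (ha (c) (N (a)) (N (b))) + (congrArg (fun zz => m (c) (zz)) (hNm (a) (b))) + (congrArg (fun zz => m (c) (N (zz))) (hc (N (a)) (b))) - (congrArg (fun zz => m (N (zz)) (c)) (hc (N (a)) (b))) - (hc (N (m (b) (N (a)))) (c)) - (congrArg (fun zz => m (N (zz)) (c)) (hc (N (b)) (a))) - (hc (N (m (a) (N (b)))) (c)) + (hc (N (N (m (a) (b)))) (c))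
  · -- G3
    intro a b c
    linear_combination (norm := ((try simp only [odotFun, ttotFun, map_add, map_sub, map_neg, LinearMap.add_apply, LinearMap.sub_apply, LinearMap.neg_apply]); (try abel))) -(hNm (a) (m (b) (c))) - (congrArg (fun zz => N (m (a) (zz))) (hc (N (c)) (b))) + (congrArg (fun zz => N (zz)) (ha (N (a)) (b) (c))) - (congrArg (fun zz => N (m (zz) (c))) (hc (N (a)) (b))) - (congrArg (fun zz => N (zz)) (ha (b) (N (a)) (c))) + (hNm (b) (m (a) (c))) + (congrArg (fun zz => N (m (b) (zz))) (hc (N (c)) (a))) - (congrArg (fun zz => N (zz)) (ha (b) (a) (N (c)))) + (congrArg (fun zz => N (m (zz) (N (c)))) (hc (b) (a))) + (congrArg (fun zz => N (zz)) (ha (a) (b) (N (c)))) - (congrArg (fun zz => N (zz)) (ha (N (b)) (a) (c))) + (congrArg (fun zz => N (m (zz) (c))) (hc (N (b)) (a))) + (congrArg (fun zz => N (zz)) (ha (a) (N (b)) (c))) + (congrArg (fun zz => N (N (zz))) (ha (b) (a) (c))) - (congrArg (fun zz => N (N (m (zz) (c)))) (hc (b) (a))) - (congrArg (fun zz => N (N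 (zz))) (ha (a) (b) (c)))
  · -- G4
    intro a b c
    linear_combination (norm := ((try simp only [odotFun, ttotFun, map_add, map_sub, map_neg, LinearMap.add_apply, LinearMap.sub_apply, LinearMap.neg_apply]); (try abel))) (h1 (N (b)) (N (a)) (c))
  · -- G5
    intro a b c
    linear_combination (norm := ((try simp only [odotFun, ttotFun, map_add, map_sub, map_neg, LinearMap.add_apply, LinearMap.sub_apply, LinearMap.neg_apply]); (try abel))) -(congrArg (fun zz => N (zz)) (h1 (N (a)) (b) (c))) - (congrArg (fun zz => N (zz)) (h1 (b) (a) (N (c)))) - (congrArg (fun zz => N (zz)) (h1 (N (b)) (a) (c))) + (congrArg (fun zz => N (N (zz))) (h1 (b) (a) (c)))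
  · -- G6
    intro a b c
    linear_combination (norm := ((try simp only [odotFun, ttotFun, map_add, map_sub, map_neg, LinearMap.add_apply, LinearMap.sub_apply, LinearMap.neg_apply]); (try abel))) -(congrArg (fun zz => N (zz)) (h2 (a) (N (b)) (c))) - (congrArg (fun zz => N (zz)) (h1 (N (a)) (b) (c))) + (congrArg (fun zz => N (zz)) (h2 (b) (N (a)) (c))) - (congrArg (fun zz => N (zz)) (h2 (a) (N (c)) (b))) - (congrArg (fun zz => N (zz)) (h1 (N (a)) (c) (b))) + (congrArg (fun zz => N (zz)) (h2 (c) (N (a)) (b))) - (congrArg (fun zz => N (zz)) (h1 (c) (b) (N (a)))) + (congrArg (fun zz => N (N (zz))) (h2 (a) (c) (b)))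
  · -- G7
    intro a b c d e
    linear_combination (norm := ((try simp only [odotFun, ttotFun, map_add, map_sub, map_neg, LinearMap.add_apply, LinearMap.sub_apply, LinearMap.neg_apply]); (try abel))) -(congrArg (fun zz => br (N (c)) (N (zz)) (e)) (h2 (N (b)) (N (d)) (a))) + (congrArg (fun zz => br (N (c)) (N (zz)) (e)) (h1 (N (b)) (a) (N (d)))) - (congrArg (fun zz => br (N (c)) (N (zz)) (e)) (h1 (N (d)) (N (a)) (b))) + (congrArg (fun zz => br (N (c)) (N (zz)) (e)) (h2 (N (a)) (N (d)) (b))) - (congrArg (fun zz => br (N (zz)) (N (d)) (e)) (h2 (N (b)) (N (c)) (a))) + (congrArg (fun zz => br (N (zz)) (N (d)) (e)) (h1 (N (b)) (a) (N (c)))) - (congrArg (fun zz => br (N (zz)) (N (d)) (e)) (h1 (N (c)) (N (a)) (b))) + (congrArg (fun zz => br (N (zz)) (N (d)) (e)) (h2 (N (a)) (N (c)) (b))) + (hF (N (a)) (N (b)) (N (c)) (N (d)) (e)) + (congrArg (fun zz => br (zz) (N (d)) (e)) (hNb (a) (b) (c))) + (congrArg (fun zz => br (N (c)) (zz) (e))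 (hNb (a) (b) (d)))
  · -- G8
    intro a b c d e
    linear_combination (norm := ((try simp only [odotFun, ttotFun, map_add, map_sub, map_neg, LinearMap.add_apply, LinearMap.sub_apply, LinearMap.neg_apply]); (try abel))) (congrArg (fun zz => br (N (zz)) (N (d)) (e)) (h2 (N (a)) (N (b)) (c))) - (congrArg (fun zz => br (N (zz)) (N (d)) (e)) (h1 (N (a)) (c) (N (b)))) + (h1 (N (br (c) (N (a)) (N (b)))) (N (d)) (e)) - (h2 (N (d)) (N (br (c) (N (a)) (N (b)))) (e)) + (congrArg (fun zz => br (N (zz)) (N (d)) (e)) (h2 (N (b)) (N (c)) (a))) - (congrArg (fun zz => br (N (zz)) (N (d)) (e)) (h1 (N (b)) (a) (N (c)))) + (h1 (N (br (a) (N (b)) (N (c)))) (N (d)) (e)) - (h2 (N (d)) (N (br (a) (N (b)) (N (c)))) (e)) + (congrArg (fun zz => br (N (zz)) (N (d)) (e)) (h1 (N (c)) (N (a)) (b))) - (congrArg (fun zz => br (N (zz)) (N (d)) (e)) (h2 (N (a)) (N (c)) (b))) + (congrArg (fun zz => br (N (zz)) (N (d)) (e)) (h1 (N (a)) (b) (N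 (c)))) - (h1 (N (br (b) (N (a)) (N (c)))) (N (d)) (e)) + (h2 (N (d)) (N (br (b) (N (a)) (N (c)))) (e)) - (h1 (N (N (br (a) (b) (N (c))))) (N (d)) (e)) + (h2 (N (d)) (N (N (br (a) (b) (N (c))))) (e)) - (congrArg (fun zz => br (N (N (zz))) (N (d)) (e)) (h2 (a) (N (b)) (c))) + (h1 (N (N (br (a) (c) (N (b))))) (N (d)) (e)) - (h2 (N (d)) (N (N (br (a) (c) (N (b))))) (e)) - (congrArg (fun zz => br (N (N (zz))) (N (d)) (e)) (h1 (N (a)) (b) (c))) + (congrArg (fun zz => br (N (N (zz))) (N (d)) (e)) (h2 (b) (N (a)) (c))) - (h1 (N (N (br (b) (c) (N (a))))) (N (d)) (e)) + (h2 (N (d)) (N (N (br (b) (c) (N (a))))) (e)) + (h1 (N (N (N (br (a) (b) (c))))) (N (d)) (e)) - (h2 (N (d)) (N (N (N (br (a) (b) (c))))) (e)) - (congrArg (fun zz => br (N (a)) (N (b)) (zz)) (h2 (N (c)) (N (d)) (e))) + (congrArg (fun zz => br (N (a)) (N (b)) (zz)) (h1 (N (c)) (e) (N (d)))) - (congrArg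 (fun zz => br (N (b)) (N (c)) (zz)) (h2 (N (a)) (N (d)) (e))) + (congrArg (fun zz => br (N (b)) (N (c)) (zz)) (h1 (N (a)) (e) (N (d)))) - (h2 (N (b)) (N (c)) (br (e) (N (a)) (N (d)))) + (h1 (N (b)) (br (e) (N (a)) (N (d))) (N (c))) - (congrArg (fun zz => br (N (c)) (N (a)) (zz)) (h2 (N (b)) (N (d)) (e))) + (congrArg (fun zz => br (N (c)) (N (a)) (zz)) (h1 (N (b)) (e) (N (d)))) - (h1 (N (c)) (N (a)) (br (e) (N (b)) (N (d)))) + (h2 (N (a)) (N (c)) (br (e) (N (b)) (N (d)))) + (hF (N (d)) (e) (N (a)) (N (b)) (N (c))) + (congrArg (fun zz => br (zz) (N (b)) (N (c))) (h1 (N (d)) (e) (N (a)))) - (congrArg (fun zz => br (zz) (N (b)) (N (c))) (h2 (e) (N (d)) (N (a)))) + (congrArg (fun zz => br (N (a)) (zz) (N (c))) (h1 (N (d)) (e) (N (b)))) - (congrArg (fun zz => br (N (a)) (zz) (N (c))) (h2 (e) (N (d)) (N (b)))) + (congrArg (fun zz => br (N (a)) (N (b)) (zz)) (h1 (N (d))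 (e) (N (c)))) - (congrArg (fun zz => br (N (a)) (N (b)) (zz)) (h2 (e) (N (d)) (N (c)))) - (congrArg (fun zz => br (N (d)) (e) (zz)) (hNb (a) (b) (c))) - (congrArg (fun zz => br (N (d)) (e) (N (zz))) (h1 (N (a)) (b) (N (c)))) - (congrArg (fun zz => br (N (d)) (e) (N (zz))) (h2 (N (a)) (N (b)) (c))) + (congrArg (fun zz => br (N (d)) (e) (N (zz))) (h1 (N (a)) (c) (N (b)))) + (congrArg (fun zz => br (N (d)) (e) (N (N (zz)))) (h2 (a) (N (b)) (c))) + (congrArg (fun zz => br (N (d)) (e) (N (N (zz)))) (h1 (N (a)) (b) (c))) - (congrArg (fun zz => br (N (d)) (e) (N (N (zz)))) (h2 (b) (N (a)) (c)))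
  · -- G9
    intro a b c d e
    linear_combination (norm := ((try simp only [odotFun, ttotFun, map_add, map_sub, map_neg, LinearMap.add_apply, LinearMap.sub_apply, LinearMap.neg_apply]); (try abel))) -(hNb (a) (b) (br (c) (d) (N (e)))) - (congrArg (fun zz => br (N (a)) (N (b)) (N (zz))) (h2 (c) (N (d)) (e))) + (hNb (a) (b) (br (c) (e) (N (d)))) - (congrArg (fun zz => br (N (a)) (N (b)) (N (zz))) (h1 (N (c)) (d) (e))) + (congrArg (fun zz => br (N (a)) (N (b)) (N (zz))) (h2 (d) (N (c)) (e))) - (hNb (a) (b) (br (d) (e) (N (c)))) + (hNb (a) (b) (N (br (c) (d) (e)))) - (congrArg (fun zz => N (br (a) (b) (N (zz)))) (h2 (N (d)) (N (e)) (c))) + (congrArg (fun zz => N (br (a) (b) (N (zz)))) (h1 (N (d)) (c) (N (e)))) - (congrArg (fun zz => N (br (a) (b) (N (zz)))) (h1 (N (e)) (N (c)) (d))) + (congrArg (fun zz => N (br (a) (b) (N (zz)))) (h2 (N (c)) (N (e)) (d))) - (congrArg (fun zz => N (br (a) (N (b)) (zz))) (h2 (N (d)) (N (e)) (c))) + (congrArg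 (fun zz => N (br (a) (N (b)) (zz))) (h1 (N (d)) (c) (N (e)))) - (congrArg (fun zz => N (br (a) (N (b)) (zz))) (h1 (N (e)) (N (c)) (d))) + (congrArg (fun zz => N (br (a) (N (b)) (zz))) (h2 (N (c)) (N (e)) (d))) + (congrArg (fun zz => N (br (a) (N (b)) (N (zz)))) (h2 (c) (N (d)) (e))) + (congrArg (fun zz => N (br (a) (N (b)) (N (zz)))) (h1 (N (c)) (d) (e))) - (congrArg (fun zz => N (br (a) (N (b)) (N (zz)))) (h2 (d) (N (c)) (e))) - (congrArg (fun zz => N (br (N (a)) (b) (zz))) (h2 (N (d)) (N (e)) (c))) + (congrArg (fun zz => N (br (N (a)) (b) (zz))) (h1 (N (d)) (c) (N (e)))) - (congrArg (fun zz => N (br (N (a)) (b) (zz))) (h1 (N (e)) (N (c)) (d))) + (congrArg (fun zz => N (br (N (a)) (b) (zz))) (h2 (N (c)) (N (e)) (d))) + (congrArg (fun zz => N (br (N (a)) (b) (N (zz)))) (h2 (c) (N (d)) (e))) + (congrArg (fun zz => N (br (N (a)) (b) (N (zz)))) (h1 (N (c)) (d) (e))) - (congrArg (fun zz => N (br (N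 (a)) (b) (N (zz)))) (h2 (d) (N (c)) (e))) + (congrArg (fun zz => N (zz)) (hNb (a) (b) (br (c) (d) (e)))) + (congrArg (fun zz => N (N (br (a) (b) (zz)))) (h2 (N (d)) (N (e)) (c))) - (congrArg (fun zz => N (N (br (a) (b) (zz)))) (h1 (N (d)) (c) (N (e)))) + (congrArg (fun zz => N (N (br (a) (b) (zz)))) (h1 (N (e)) (N (c)) (d))) - (congrArg (fun zz => N (N (br (a) (b) (zz)))) (h2 (N (c)) (N (e)) (d))) - (congrArg (fun zz => N (N (br (a) (b) (N (zz))))) (h2 (c) (N (d)) (e))) - (congrArg (fun zz => N (N (br (a) (b) (N (zz))))) (h1 (N (c)) (d) (e))) + (congrArg (fun zz => N (N (br (a) (b) (N (zz))))) (h2 (d) (N (c)) (e))) + (hNb (c) (d) (br (a) (b) (N (e)))) + (congrArg (fun zz => br (N (c)) (N (d)) (N (zz))) (h2 (a) (N (b)) (e))) - (hNb (c) (d) (br (a) (e) (N (b)))) + (congrArg (fun zz => br (N (c)) (N (d)) (N (zz))) (h1 (N (a)) (b) (e))) - (congrArg (fun zz => br (N (c)) (N (d)) (N (zz))) (h2 (b)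 (N (a)) (e))) + (hNb (c) (d) (br (b) (e) (N (a)))) - (hNb (c) (d) (N (br (a) (b) (e)))) + (hNb (d) (e) (br (a) (b) (N (c)))) + (congrArg (fun zz => br (N (d)) (N (e)) (N (zz))) (h2 (a) (N (b)) (c))) - (hNb (d) (e) (br (a) (c) (N (b)))) + (congrArg (fun zz => br (N (d)) (N (e)) (N (zz))) (h1 (N (a)) (b) (c))) - (congrArg (fun zz => br (N (d)) (N (e)) (N (zz))) (h2 (b) (N (a)) (c))) + (hNb (d) (e) (br (b) (c) (N (a)))) - (hNb (d) (e) (N (br (a) (b) (c)))) + (h1 (N (e)) (N (c)) (N (br (a) (b) (N (d))))) - (hNb (c) (e) (br (a) (b) (N (d)))) + (congrArg (fun zz => br (N (e)) (N (c)) (N (zz))) (h2 (a) (N (b)) (d))) - (h1 (N (e)) (N (c)) (N (br (a) (d) (N (b))))) + (hNb (c) (e) (br (a) (d) (N (b)))) + (congrArg (fun zz => br (N (e)) (N (c)) (N (zz))) (h1 (N (a)) (b) (d))) - (congrArg (fun zz => br (N (e)) (N (c)) (N (zz))) (h2 (b) (N (a)) (d))) + (h1 (N (e)) (N (c)) (N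 (br (b) (d) (N (a))))) - (hNb (c) (e) (br (b) (d) (N (a)))) - (h1 (N (e)) (N (c)) (N (N (br (a) (b) (d))))) + (hNb (c) (e) (N (br (a) (b) (d)))) + (congrArg (fun zz => N (br (c) (d) (N (zz)))) (h2 (N (b)) (N (e)) (a))) - (congrArg (fun zz => N (br (c) (d) (N (zz)))) (h1 (N (b)) (a) (N (e)))) + (congrArg (fun zz => N (br (c) (d) (N (zz)))) (h1 (N (e)) (N (a)) (b))) - (congrArg (fun zz => N (br (c) (d) (N (zz)))) (h2 (N (a)) (N (e)) (b))) + (congrArg (fun zz => N (br (c) (zz) (N (e)))) (h2 (N (b)) (N (d)) (a))) - (congrArg (fun zz => N (br (c) (zz) (N (e)))) (h1 (N (b)) (a) (N (d)))) + (congrArg (fun zz => N (br (c) (zz) (N (e)))) (h1 (N (d)) (N (a)) (b))) - (congrArg (fun zz => N (br (c) (zz) (N (e)))) (h2 (N (a)) (N (d)) (b))) + (congrArg (fun zz => N (br (c) (N (d)) (zz))) (h2 (N (b)) (N (e)) (a))) - (congrArg (fun zz => N (br (c) (N (d)) (zz))) (h1 (N (b)) (a) (N (e)))) + (congrArg (fun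 zz => N (br (c) (N (d)) (zz))) (h1 (N (e)) (N (a)) (b))) - (congrArg (fun zz => N (br (c) (N (d)) (zz))) (h2 (N (a)) (N (e)) (b))) - (congrArg (fun zz => N (br (c) (N (d)) (N (zz)))) (h2 (a) (N (b)) (e))) - (congrArg (fun zz => N (br (c) (N (d)) (N (zz)))) (h1 (N (a)) (b) (e))) + (congrArg (fun zz => N (br (c) (N (d)) (N (zz)))) (h2 (b) (N (a)) (e))) - (congrArg (fun zz => N (zz)) (h2 (c) (N (br (a) (b) (N (d)))) (N (e)))) - (congrArg (fun zz => N (br (c) (N (zz)) (N (e)))) (h2 (a) (N (b)) (d))) + (congrArg (fun zz => N (zz)) (h2 (c) (N (br (a) (d) (N (b)))) (N (e)))) - (congrArg (fun zz => N (br (c) (N (zz)) (N (e)))) (h1 (N (a)) (b) (d))) + (congrArg (fun zz => N (br (c) (N (zz)) (N (e)))) (h2 (b) (N (a)) (d))) - (congrArg (fun zz => N (zz)) (h2 (c) (N (br (b) (d) (N (a)))) (N (e)))) + (congrArg (fun zz => N (zz)) (h2 (c) (N (N (br (a) (b) (d)))) (N (e)))) + (congrArg (fun zz => N (br (c) (N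 (zz)) (e))) (h2 (N (b)) (N (d)) (a))) - (congrArg (fun zz => N (br (c) (N (zz)) (e))) (h1 (N (b)) (a) (N (d)))) + (congrArg (fun zz => N (br (c) (N (zz)) (e))) (h1 (N (d)) (N (a)) (b))) - (congrArg (fun zz => N (br (c) (N (zz)) (e))) (h2 (N (a)) (N (d)) (b))) + (congrArg (fun zz => N (br (zz) (d) (N (e)))) (h2 (N (b)) (N (c)) (a))) - (congrArg (fun zz => N (br (zz) (d) (N (e)))) (h1 (N (b)) (a) (N (c)))) + (congrArg (fun zz => N (br (zz) (N (d)) (e))) (h2 (N (b)) (N (c)) (a))) - (congrArg (fun zz => N (br (zz) (N (d)) (e))) (h1 (N (b)) (a) (N (c)))) + (congrArg (fun zz => N (br (zz) (d) (N (e)))) (h1 (N (c)) (N (a)) (b))) - (congrArg (fun zz => N (br (zz) (d) (N (e)))) (h2 (N (a)) (N (c)) (b))) + (congrArg (fun zz => N (br (zz) (N (d)) (e))) (h1 (N (c)) (N (a)) (b))) - (congrArg (fun zz => N (br (zz) (N (d)) (e))) (h2 (N (a)) (N (c)) (b))) + (congrArg (fun zz => N (br (N (c)) (d) (zz))) (h2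 (N (b)) (N (e)) (a))) - (congrArg (fun zz => N (br (N (c)) (d) (zz))) (h1 (N (b)) (a) (N (e)))) + (congrArg (fun zz => N (br (N (c)) (d) (zz))) (h1 (N (e)) (N (a)) (b))) - (congrArg (fun zz => N (br (N (c)) (d) (zz))) (h2 (N (a)) (N (e)) (b))) - (congrArg (fun zz => N (br (N (c)) (d) (N (zz)))) (h2 (a) (N (b)) (e))) - (congrArg (fun zz => N (br (N (c)) (d) (N (zz)))) (h1 (N (a)) (b) (e))) + (congrArg (fun zz => N (br (N (c)) (d) (N (zz)))) (h2 (b) (N (a)) (e))) + (congrArg (fun zz => N (br (N (c)) (zz) (e))) (h2 (N (b)) (N (d)) (a))) - (congrArg (fun zz => N (br (N (c)) (zz) (e))) (h1 (N (b)) (a) (N (d)))) + (congrArg (fun zz => N (br (N (c)) (zz) (e))) (h1 (N (d)) (N (a)) (b))) - (congrArg (fun zz => N (br (N (c)) (zz) (e))) (h2 (N (a)) (N (d)) (b))) - (congrArg (fun zz => N (zz)) (hNb (c) (d) (br (a) (b) (e)))) - (congrArg (fun zz => N (zz)) (h2 (N (c)) (N (e)) (br (a) (b) (N (d))))) + (congrArg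 (fun zz => N (zz)) (h2 (N (c)) (N (e)) (br (a) (d) (N (b))))) - (congrArg (fun zz => N (zz)) (h2 (N (c)) (N (e)) (br (b) (d) (N (a))))) + (congrArg (fun zz => N (zz)) (hNb (c) (e) (br (a) (b) (d)))) - (congrArg (fun zz => N (zz)) (h2 (N (c)) (N (br (a) (b) (N (d)))) (e))) - (congrArg (fun zz => N (br (N (c)) (N (zz)) (e))) (h2 (a) (N (b)) (d))) + (congrArg (fun zz => N (zz)) (h2 (N (c)) (N (br (a) (d) (N (b)))) (e))) - (congrArg (fun zz => N (br (N (c)) (N (zz)) (e))) (h1 (N (a)) (b) (d))) + (congrArg (fun zz => N (br (N (c)) (N (zz)) (e))) (h2 (b) (N (a)) (d))) - (congrArg (fun zz => N (zz)) (h2 (N (c)) (N (br (b) (d) (N (a)))) (e))) + (congrArg (fun zz => N (zz)) (h2 (N (c)) (N (N (br (a) (b) (d)))) (e))) + (congrArg (fun zz => N (zz)) (h2 (N (d)) (N (e)) (br (a) (b) (N (c))))) - (congrArg (fun zz => N (zz)) (h1 (N (d)) (br (a) (b) (N (c))) (N (e)))) - (congrArg (fun zz => N (zz)) (h2 (N (d))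 (N (e)) (br (a) (c) (N (b))))) + (congrArg (fun zz => N (zz)) (h1 (N (d)) (br (a) (c) (N (b))) (N (e)))) + (congrArg (fun zz => N (zz)) (h2 (N (d)) (N (e)) (br (b) (c) (N (a))))) - (congrArg (fun zz => N (zz)) (h1 (N (d)) (br (b) (c) (N (a))) (N (e)))) - (congrArg (fun zz => N (zz)) (hNb (d) (e) (br (a) (b) (c)))) - (congrArg (fun zz => N (zz)) (h1 (N (br (a) (b) (N (c)))) (d) (N (e)))) + (congrArg (fun zz => N (zz)) (h2 (d) (N (br (a) (b) (N (c)))) (N (e)))) - (congrArg (fun zz => N (zz)) (h1 (N (br (a) (b) (N (c)))) (N (d)) (e))) + (congrArg (fun zz => N (zz)) (h2 (N (d)) (N (br (a) (b) (N (c)))) (e))) - (congrArg (fun zz => N (br (N (zz)) (d) (N (e)))) (h2 (a) (N (b)) (c))) + (congrArg (fun zz => N (zz)) (h1 (N (br (a) (c) (N (b)))) (d) (N (e)))) - (congrArg (fun zz => N (zz)) (h2 (d) (N (br (a) (c) (N (b)))) (N (e)))) - (congrArg (fun zz => N (br (N (zz)) (N (d)) (e))) (h2 (a) (N (b)) (c)))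 + (congrArg (fun zz => N (zz)) (h1 (N (br (a) (c) (N (b)))) (N (d)) (e))) - (congrArg (fun zz => N (zz)) (h2 (N (d)) (N (br (a) (c) (N (b)))) (e))) - (congrArg (fun zz => N (br (N (zz)) (d) (N (e)))) (h1 (N (a)) (b) (c))) + (congrArg (fun zz => N (br (N (zz)) (d) (N (e)))) (h2 (b) (N (a)) (c))) - (congrArg (fun zz => N (zz)) (h1 (N (br (b) (c) (N (a)))) (d) (N (e)))) + (congrArg (fun zz => N (zz)) (h2 (d) (N (br (b) (c) (N (a)))) (N (e)))) - (congrArg (fun zz => N (br (N (zz)) (N (d)) (e))) (h1 (N (a)) (b) (c))) + (congrArg (fun zz => N (br (N (zz)) (N (d)) (e))) (h2 (b) (N (a)) (c))) - (congrArg (fun zz => N (zz)) (h1 (N (br (b) (c) (N (a)))) (N (d)) (e))) + (congrArg (fun zz => N (zz)) (h2 (N (d)) (N (br (b) (c) (N (a)))) (e))) + (congrArg (fun zz => N (zz)) (h1 (N (N (br (a) (b) (c)))) (d) (N (e)))) - (congrArg (fun zz => N (zz)) (h2 (d) (N (N (br (a) (b) (c)))) (N (e)))) + (congrArg (fun zz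 => N (zz)) (h1 (N (N (br (a) (b) (c)))) (N (d)) (e))) - (congrArg (fun zz => N (zz)) (h2 (N (d)) (N (N (br (a) (b) (c)))) (e))) + (congrArg (fun zz => N (br (N (zz)) (d) (e))) (h2 (N (b)) (N (c)) (a))) - (congrArg (fun zz => N (br (N (zz)) (d) (e))) (h1 (N (b)) (a) (N (c)))) + (congrArg (fun zz => N (br (N (zz)) (d) (e))) (h1 (N (c)) (N (a)) (b))) - (congrArg (fun zz => N (br (N (zz)) (d) (e))) (h2 (N (a)) (N (c)) (b))) - (congrArg (fun zz => N (N (br (c) (d) (zz)))) (h2 (N (b)) (N (e)) (a))) + (congrArg (fun zz => N (N (br (c) (d) (zz)))) (h1 (N (b)) (a) (N (e)))) - (congrArg (fun zz => N (N (br (c) (d) (zz)))) (h1 (N (e)) (N (a)) (b))) + (congrArg (fun zz => N (N (br (c) (d) (zz)))) (h2 (N (a)) (N (e)) (b))) + (congrArg (fun zz => N (N (br (c) (d) (N (zz))))) (h2 (a) (N (b)) (e))) + (congrArg (fun zz => N (N (br (c) (d) (N (zz))))) (h1 (N (a)) (b) (e))) - (congrArg (fun zz => N (N (br (c) (d) (N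 (zz))))) (h2 (b) (N (a)) (e))) - (congrArg (fun zz => N (N (br (c) (zz) (e)))) (h2 (N (b)) (N (d)) (a))) + (congrArg (fun zz => N (N (br (c) (zz) (e)))) (h1 (N (b)) (a) (N (d)))) - (congrArg (fun zz => N (N (br (c) (zz) (e)))) (h1 (N (d)) (N (a)) (b))) + (congrArg (fun zz => N (N (br (c) (zz) (e)))) (h2 (N (a)) (N (d)) (b))) + (congrArg (fun zz => N (N (zz))) (h2 (c) (N (e)) (br (a) (b) (N (d))))) - (congrArg (fun zz => N (N (zz))) (h2 (c) (N (e)) (br (a) (d) (N (b))))) + (congrArg (fun zz => N (N (zz))) (h2 (c) (N (e)) (br (b) (d) (N (a))))) + (congrArg (fun zz => N (N (zz))) (h2 (c) (N (br (a) (b) (N (d)))) (e))) + (congrArg (fun zz => N (N (br (c) (N (zz)) (e)))) (h2 (a) (N (b)) (d))) - (congrArg (fun zz => N (N (zz))) (h2 (c) (N (br (a) (d) (N (b)))) (e))) + (congrArg (fun zz => N (N (br (c) (N (zz)) (e)))) (h1 (N (a)) (b) (d))) - (congrArg (fun zz => N (N (br (c) (N (zz)) (e)))) (h2 (b) (N (a))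 (d))) + (congrArg (fun zz => N (N (zz))) (h2 (c) (N (br (b) (d) (N (a)))) (e))) - (congrArg (fun zz => N (N (zz))) (h2 (c) (N (N (br (a) (b) (d)))) (e))) - (congrArg (fun zz => N (N (zz))) (h2 (d) (N (e)) (br (a) (b) (N (c))))) + (congrArg (fun zz => N (N (zz))) (h2 (d) (N (e)) (br (a) (c) (N (b))))) - (congrArg (fun zz => N (N (zz))) (h2 (d) (N (e)) (br (b) (c) (N (a))))) - (congrArg (fun zz => N (N (br (zz) (d) (e)))) (h2 (N (b)) (N (c)) (a))) + (congrArg (fun zz => N (N (br (zz) (d) (e)))) (h1 (N (b)) (a) (N (c)))) - (congrArg (fun zz => N (N (br (zz) (d) (e)))) (h1 (N (c)) (N (a)) (b))) + (congrArg (fun zz => N (N (br (zz) (d) (e)))) (h2 (N (a)) (N (c)) (b))) + (congrArg (fun zz => N (N (zz))) (h1 (N (c)) (e) (br (a) (b) (N (d))))) - (congrArg (fun zz => N (N (zz))) (h2 (e) (N (c)) (br (a) (b) (N (d))))) - (congrArg (fun zz => N (N (zz))) (h1 (N (c)) (e) (br (a) (d) (N (b))))) + (congrArg (fun zz => N (N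 (zz))) (h2 (e) (N (c)) (br (a) (d) (N (b))))) + (congrArg (fun zz => N (N (zz))) (h1 (N (c)) (e) (br (b) (d) (N (a))))) - (congrArg (fun zz => N (N (zz))) (h2 (e) (N (c)) (br (b) (d) (N (a))))) + (congrArg (fun zz => N (N (zz))) (h2 (N (c)) (N (e)) (br (a) (b) (d)))) - (congrArg (fun zz => N (N (zz))) (h1 (N (d)) (e) (br (a) (b) (N (c))))) + (congrArg (fun zz => N (N (zz))) (h2 (e) (N (d)) (br (a) (b) (N (c))))) + (congrArg (fun zz => N (N (zz))) (h1 (N (d)) (e) (br (a) (c) (N (b))))) - (congrArg (fun zz => N (N (zz))) (h2 (e) (N (d)) (br (a) (c) (N (b))))) - (congrArg (fun zz => N (N (zz))) (h1 (N (d)) (e) (br (b) (c) (N (a))))) + (congrArg (fun zz => N (N (zz))) (h2 (e) (N (d)) (br (b) (c) (N (a))))) - (congrArg (fun zz => N (N (zz))) (h2 (N (d)) (N (e)) (br (a) (b) (c)))) + (congrArg (fun zz => N (N (zz))) (h1 (N (d)) (br (a) (b) (c)) (N (e)))) + (congrArg (fun zz => N (N (zz))) (h1 (N (br (a) (b) (N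 (c)))) (d) (e))) - (congrArg (fun zz => N (N (zz))) (h2 (d) (N (br (a) (b) (N (c)))) (e))) + (congrArg (fun zz => N (N (br (N (zz)) (d) (e)))) (h2 (a) (N (b)) (c))) - (congrArg (fun zz => N (N (zz))) (h1 (N (br (a) (c) (N (b)))) (d) (e))) + (congrArg (fun zz => N (N (zz))) (h2 (d) (N (br (a) (c) (N (b)))) (e))) + (congrArg (fun zz => N (N (br (N (zz)) (d) (e)))) (h1 (N (a)) (b) (c))) - (congrArg (fun zz => N (N (br (N (zz)) (d) (e)))) (h2 (b) (N (a)) (c))) + (congrArg (fun zz => N (N (zz))) (h1 (N (br (b) (c) (N (a)))) (d) (e))) - (congrArg (fun zz => N (N (zz))) (h2 (d) (N (br (b) (c) (N (a)))) (e))) - (congrArg (fun zz => N (N (zz))) (h1 (N (N (br (a) (b) (c)))) (d) (e))) + (congrArg (fun zz => N (N (zz))) (h2 (d) (N (N (br (a) (b) (c)))) (e))) - (congrArg (fun zz => N (N (N (zz)))) (h2 (c) (N (e)) (br (a) (b) (d)))) + (congrArg (fun zz => N (N (N (zz)))) (h2 (d) (N (e)) (br (a) (b) (c)))) - (congrArg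 (fun zz => N (N (N (zz)))) (h1 (N (c)) (e) (br (a) (b) (d)))) + (congrArg (fun zz => N (N (N (zz)))) (h2 (e) (N (c)) (br (a) (b) (d)))) + (congrArg (fun zz => N (N (N (zz)))) (h1 (N (d)) (e) (br (a) (b) (c)))) - (congrArg (fun zz => N (N (N (zz)))) (h2 (e) (N (d)) (br (a) (b) (c)))) - (congrArg (fun zz => N (zz)) (hF (N (a)) (N (b)) (N (c)) (d) (e))) - (congrArg (fun zz => N (br (zz) (d) (e))) (hNb (a) (b) (c))) + (congrArg (fun zz => N (br (N (a)) (N (b)) (zz))) (h1 (N (c)) (d) (e))) - (congrArg (fun zz => N (br (N (a)) (N (b)) (zz))) (h2 (d) (N (c)) (e))) - (congrArg (fun zz => N (zz)) (hF (N (a)) (N (b)) (c) (N (d)) (e))) - (congrArg (fun zz => N (br (c) (zz) (e))) (hNb (a) (b) (d))) + (congrArg (fun zz => N (br (N (a)) (N (b)) (zz))) (h2 (c) (N (d)) (e))) - (congrArg (fun zz => N (zz)) (hF (N (a)) (b) (N (c)) (N (d)) (e))) - (congrArg (fun zz => N (br (N (c)) (N (d)) (zz))) (h1 (N (a)) (b)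 (e))) + (congrArg (fun zz => N (br (N (c)) (N (d)) (zz))) (h2 (b) (N (a)) (e))) - (congrArg (fun zz => N (zz)) (hF (a) (N (b)) (N (c)) (N (d)) (e))) - (congrArg (fun zz => N (br (N (c)) (N (d)) (zz))) (h2 (a) (N (b)) (e))) - (congrArg (fun zz => N (zz)) (hF (N (a)) (N (b)) (c) (d) (N (e)))) - (congrArg (fun zz => N (br (c) (d) (zz))) (hNb (a) (b) (e))) - (congrArg (fun zz => N (zz)) (hF (N (a)) (b) (N (c)) (d) (N (e)))) - (congrArg (fun zz => N (br (N (c)) (zz) (N (e)))) (h1 (N (a)) (b) (d))) + (congrArg (fun zz => N (br (N (c)) (zz) (N (e)))) (h2 (b) (N (a)) (d))) - (congrArg (fun zz => N (zz)) (hF (a) (N (b)) (N (c)) (d) (N (e)))) - (congrArg (fun zz => N (br (N (c)) (zz) (N (e)))) (h2 (a) (N (b)) (d))) - (congrArg (fun zz => N (zz)) (hF (N (a)) (b) (c) (N (d)) (N (e)))) - (congrArg (fun zz => N (br (zz) (N (d)) (N (e)))) (h1 (N (a)) (b) (c))) + (congrArg (fun zz => N (br (zz) (N (d)) (N (e))))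 (h2 (b) (N (a)) (c))) - (congrArg (fun zz => N (zz)) (hF (a) (N (b)) (c) (N (d)) (N (e)))) - (congrArg (fun zz => N (br (zz) (N (d)) (N (e)))) (h2 (a) (N (b)) (c))) - (congrArg (fun zz => N (zz)) (hF (a) (b) (N (c)) (N (d)) (N (e)))) + (congrArg (fun zz => N (br (a) (b) (zz))) (hNb (c) (d) (e))) + (congrArg (fun zz => N (N (zz))) (hF (N (a)) (N (b)) (c) (d) (e))) + (congrArg (fun zz => N (N (zz))) (hF (N (a)) (b) (N (c)) (d) (e))) - (congrArg (fun zz => N (N (br (N (a)) (b) (zz)))) (h1 (N (c)) (d) (e))) + (congrArg (fun zz => N (N (br (N (a)) (b) (zz)))) (h2 (d) (N (c)) (e))) + (congrArg (fun zz => N (N (br (N (c)) (d) (zz)))) (h1 (N (a)) (b) (e))) - (congrArg (fun zz => N (N (br (N (c)) (d) (zz)))) (h2 (b) (N (a)) (e))) + (congrArg (fun zz => N (N (br (N (c)) (zz) (e)))) (h1 (N (a)) (b) (d))) - (congrArg (fun zz => N (N (br (N (c)) (zz) (e)))) (h2 (b) (N (a)) (d))) + (congrArg (fun zz => N (N (zz)))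 (h1 (N (c)) (br (b) (d) (N (a))) (e))) - (congrArg (fun zz => N (N (zz))) (h2 (br (b) (d) (N (a))) (N (c)) (e))) + (congrArg (fun zz => N (N (zz))) (h1 (br (b) (d) (N (a))) (e) (N (c)))) + (congrArg (fun zz => N (N (zz))) (hF (a) (N (b)) (N (c)) (d) (e))) - (congrArg (fun zz => N (N (br (a) (N (b)) (zz)))) (h1 (N (c)) (d) (e))) + (congrArg (fun zz => N (N (br (a) (N (b)) (zz)))) (h2 (d) (N (c)) (e))) + (congrArg (fun zz => N (N (br (N (c)) (d) (zz)))) (h2 (a) (N (b)) (e))) + (congrArg (fun zz => N (N (br (N (c)) (zz) (e)))) (h2 (a) (N (b)) (d))) - (congrArg (fun zz => N (N (zz))) (h1 (N (c)) (br (a) (d) (N (b))) (e))) + (congrArg (fun zz => N (N (zz))) (h2 (br (a) (d) (N (b))) (N (c)) (e))) - (congrArg (fun zz => N (N (zz))) (h1 (br (a) (d) (N (b))) (e) (N (c)))) + (congrArg (fun zz => N (N (zz))) (hF (N (a)) (b) (c) (N (d)) (e))) + (congrArg (fun zz => N (N (br (c) (N (d)) (zz)))) (h1 (N (a)) (b)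 (e))) - (congrArg (fun zz => N (N (br (c) (N (d)) (zz)))) (h2 (b) (N (a)) (e))) + (congrArg (fun zz => N (N (br (zz) (N (d)) (e)))) (h1 (N (a)) (b) (c))) - (congrArg (fun zz => N (N (br (zz) (N (d)) (e)))) (h2 (b) (N (a)) (c))) + (congrArg (fun zz => N (N (zz))) (h2 (br (b) (c) (N (a))) (N (d)) (e))) - (congrArg (fun zz => N (N (zz))) (h1 (br (b) (c) (N (a))) (e) (N (d)))) - (congrArg (fun zz => N (N (br (N (a)) (b) (zz)))) (h2 (c) (N (d)) (e))) + (congrArg (fun zz => N (N (zz))) (hF (a) (N (b)) (c) (N (d)) (e))) - (congrArg (fun zz => N (N (br (a) (N (b)) (zz)))) (h2 (c) (N (d)) (e))) + (congrArg (fun zz => N (N (br (c) (N (d)) (zz)))) (h2 (a) (N (b)) (e))) + (congrArg (fun zz => N (N (br (zz) (N (d)) (e)))) (h2 (a) (N (b)) (c))) - (congrArg (fun zz => N (N (zz))) (h2 (br (a) (c) (N (b))) (N (d)) (e))) + (congrArg (fun zz => N (N (zz))) (h1 (br (a) (c) (N (b))) (e) (N (d)))) + (congrArg (fun zz => N (N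 (zz))) (hF (a) (b) (N (c)) (N (d)) (e))) + (congrArg (fun zz => N (N (zz))) (h2 (br (a) (b) (N (c))) (N (d)) (e))) - (congrArg (fun zz => N (N (zz))) (h1 (br (a) (b) (N (c))) (e) (N (d)))) + (congrArg (fun zz => N (N (zz))) (h1 (N (c)) (br (a) (b) (N (d))) (e))) - (congrArg (fun zz => N (N (zz))) (h2 (br (a) (b) (N (d))) (N (c)) (e))) + (congrArg (fun zz => N (N (zz))) (h1 (br (a) (b) (N (d))) (e) (N (c)))) + (congrArg (fun zz => N (N (zz))) (hF (N (a)) (b) (c) (d) (N (e)))) + (congrArg (fun zz => N (N (br (c) (zz) (N (e))))) (h1 (N (a)) (b) (d))) - (congrArg (fun zz => N (N (br (c) (zz) (N (e))))) (h2 (b) (N (a)) (d))) + (congrArg (fun zz => N (N (br (zz) (d) (N (e))))) (h1 (N (a)) (b) (c))) - (congrArg (fun zz => N (N (br (zz) (d) (N (e))))) (h2 (b) (N (a)) (c))) + (congrArg (fun zz => N (N (zz))) (h1 (br (b) (c) (N (a))) (d) (N (e)))) + (congrArg (fun zz => N (N (zz))) (hF (a) (N (b)) (c) (d) (N (e))))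 + (congrArg (fun zz => N (N (br (c) (zz) (N (e))))) (h2 (a) (N (b)) (d))) + (congrArg (fun zz => N (N (br (zz) (d) (N (e))))) (h2 (a) (N (b)) (c))) - (congrArg (fun zz => N (N (zz))) (h1 (br (a) (c) (N (b))) (d) (N (e)))) + (congrArg (fun zz => N (N (zz))) (hF (a) (b) (N (c)) (d) (N (e)))) + (congrArg (fun zz => N (N (zz))) (h1 (br (a) (b) (N (c))) (d) (N (e)))) + (congrArg (fun zz => N (N (zz))) (hF (a) (b) (c) (N (d)) (N (e)))) - (congrArg (fun zz => N (N (N (zz)))) (hF (N (a)) (b) (c) (d) (e))) - (congrArg (fun zz => N (N (N (br (c) (d) (zz))))) (h1 (N (a)) (b) (e))) + (congrArg (fun zz => N (N (N (br (c) (d) (zz))))) (h2 (b) (N (a)) (e))) - (congrArg (fun zz => N (N (N (br (c) (zz) (e))))) (h1 (N (a)) (b) (d))) + (congrArg (fun zz => N (N (N (br (c) (zz) (e))))) (h2 (b) (N (a)) (d))) - (congrArg (fun zz => N (N (N (zz)))) (h2 (c) (br (b) (d) (N (a))) (e))) - (congrArg (fun zz => N (N (N (br (zz) (d) (e))))) (h1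 (N (a)) (b) (c))) + (congrArg (fun zz => N (N (N (br (zz) (d) (e))))) (h2 (b) (N (a)) (c))) - (congrArg (fun zz => N (N (N (zz)))) (h1 (br (b) (c) (N (a))) (d) (e))) + (congrArg (fun zz => N (N (N (zz)))) (h2 (d) (br (b) (c) (N (a))) (e))) - (congrArg (fun zz => N (N (N (zz)))) (hF (a) (N (b)) (c) (d) (e))) - (congrArg (fun zz => N (N (N (br (c) (d) (zz))))) (h2 (a) (N (b)) (e))) - (congrArg (fun zz => N (N (N (br (c) (zz) (e))))) (h2 (a) (N (b)) (d))) + (congrArg (fun zz => N (N (N (zz)))) (h2 (c) (br (a) (d) (N (b))) (e))) - (congrArg (fun zz => N (N (N (br (zz) (d) (e))))) (h2 (a) (N (b)) (c))) + (congrArg (fun zz => N (N (N (zz)))) (h1 (br (a) (c) (N (b))) (d) (e))) - (congrArg (fun zz => N (N (N (zz)))) (h2 (d) (br (a) (c) (N (b))) (e))) - (congrArg (fun zz => N (N (N (zz)))) (hF (a) (b) (N (c)) (d) (e))) + (congrArg (fun zz => N (N (N (br (a) (b) (zz))))) (h1 (N (c)) (d) (e))) - (congrArg (fun zz => N (N (N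 (br (a) (b) (zz))))) (h2 (d) (N (c)) (e))) - (congrArg (fun zz => N (N (N (zz)))) (h1 (br (a) (b) (N (c))) (d) (e))) + (congrArg (fun zz => N (N (N (zz)))) (h2 (d) (br (a) (b) (N (c))) (e))) - (congrArg (fun zz => N (N (N (zz)))) (h1 (N (c)) (br (a) (b) (d)) (e))) + (congrArg (fun zz => N (N (N (zz)))) (h2 (br (a) (b) (d)) (N (c)) (e))) - (congrArg (fun zz => N (N (N (zz)))) (h1 (br (a) (b) (d)) (e) (N (c)))) - (congrArg (fun zz => N (N (N (zz)))) (hF (a) (b) (c) (N (d)) (e))) + (congrArg (fun zz => N (N (N (br (a) (b) (zz))))) (h2 (c) (N (d)) (e))) - (congrArg (fun zz => N (N (N (zz)))) (h2 (c) (br (a) (b) (N (d))) (e))) - (congrArg (fun zz => N (N (N (zz)))) (h2 (br (a) (b) (c)) (N (d)) (e))) + (congrArg (fun zz => N (N (N (zz)))) (h1 (br (a) (b) (c)) (e) (N (d)))) - (congrArg (fun zz => N (N (N (zz)))) (hF (a) (b) (c) (d) (N (e)))) - (congrArg (fun zz => N (N (N (zz)))) (h1 (br (a) (b) (c)) (d)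 (N (e)))) + (congrArg (fun zz => N (N (N (N (zz))))) (hF (a) (b) (c) (d) (e))) + (congrArg (fun zz => N (N (N (N (zz))))) (h2 (c) (br (a) (b) (d)) (e))) + (congrArg (fun zz => N (N (N (N (zz))))) (h1 (br (a) (b) (c)) (d) (e))) - (congrArg (fun zz => N (N (N (N (zz))))) (h2 (d) (br (a) (b) (c)) (e)))
  · -- G10
    intro a b c x
    linear_combination (norm := ((try simp only [odotFun, ttotFun, map_add, map_sub, map_neg, LinearMap.add_apply, LinearMap.sub_apply, LinearMap.neg_apply]); (try abel))) (congrArg (fun zz => m (N (zz)) (x)) (h2 (N (b)) (N (c)) (a))) - (congrArg (fun zz => m (N (zz)) (x)) (h1 (N (b)) (a) (N (c)))) + (congrArg (fun zz => m (N (zz)) (x)) (h1 (N (c)) (N (a)) (b))) - (congrArg (fun zz => m (N (zz)) (x)) (h2 (N (a)) (N (c)) (b))) - (hL (N (a)) (N (b)) (N (c)) (x)) - (congrArg (fun zz => m (zz) (x)) (hNb (a) (b) (c)))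
  · -- G11
    intro a b c x
    linear_combination (norm := ((try simp only [odotFun, ttotFun, map_add, map_sub, map_neg, LinearMap.add_apply, LinearMap.sub_apply, LinearMap.neg_apply]); (try abel))) (congrArg (fun zz => br (N (zz)) (N (c)) (x)) (hc (N (a)) (b))) + (h1 (N (m (b) (N (a)))) (N (c)) (x)) - (h2 (N (c)) (N (m (b) (N (a)))) (x)) + (h1 (N (c)) (x) (N (m (b) (N (a))))) + (congrArg (fun zz => br (N (zz)) (N (c)) (x)) (hc (N (b)) (a))) + (h1 (N (m (a) (N (b)))) (N (c)) (x)) - (h2 (N (c)) (N (m (a) (N (b)))) (x)) + (h1 (N (c)) (x) (N (m (a) (N (b))))) - (h1 (N (N (m (a) (b)))) (N (c)) (x)) + (h2 (N (c)) (N (N (m (a) (b)))) (x)) - (h1 (N (c)) (x) (N (N (m (a) (b))))) - (congrArg (fun zz => m (N (a)) (zz)) (h2 (N (b)) (N (c)) (x))) + (congrArg (fun zz => m (N (a)) (zz)) (h1 (N (b)) (x) (N (c)))) - (congrArg (fun zz => m (N (b)) (zz)) (h2 (N (a)) (N (c)) (x))) + (congrArg (fun zz => m (N (b)) (zz)) (h1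 (N (a)) (x) (N (c)))) - (hc (N (b)) (br (x) (N (a)) (N (c)))) + (congrArg (fun zz => br (x) (N (c)) (zz)) (hNm (a) (b))) - (hL (x) (N (c)) (N (a)) (N (b))) + (congrArg (fun zz => br (x) (N (c)) (N (zz))) (hc (N (a)) (b))) - (congrArg (fun zz => m (zz) (N (b))) (h2 (x) (N (c)) (N (a)))) - (congrArg (fun zz => m (N (a)) (zz)) (h2 (x) (N (c)) (N (b))))
  · -- G12
    intro a b c x
    linear_combination (norm := ((try simp only [odotFun, ttotFun, map_add, map_sub, map_neg, LinearMap.add_apply, LinearMap.sub_apply, LinearMap.neg_apply]); (try abel))) -(hNb (a) (b) (m (c) (x))) - (congrArg (fun zz => N (br (a) (b) (N (zz)))) (hc (N (x)) (c))) - (congrArg (fun zz => N (zz)) (hL (a) (N (b)) (N (c)) (x))) - (congrArg (fun zz => N (zz)) (hL (a) (N (b)) (N (x)) (c))) - (congrArg (fun zz => N (zz)) (hL (N (a)) (b) (N (c)) (x))) - (congrArg (fun zz => N (zz)) (hL (N (a)) (b) (N (x)) (c))) - (congrArg (fun zz => N (zz)) (hL (N (a)) (N (b)) (c) (x))) - (congrArg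 (fun zz => N (zz)) (hc (br (a) (N (b)) (N (x))) (c))) - (congrArg (fun zz => N (m (zz) (c))) (h1 (N (a)) (b) (N (x)))) + (congrArg (fun zz => N (zz)) (hc (br (b) (N (a)) (N (x))) (c))) - (congrArg (fun zz => N (m (N (c)) (zz))) (h2 (a) (N (b)) (x))) - (congrArg (fun zz => N (m (N (c)) (zz))) (h1 (N (a)) (b) (x))) + (congrArg (fun zz => N (m (N (c)) (zz))) (h2 (b) (N (a)) (x))) - (congrArg (fun zz => N (m (N (x)) (zz))) (h2 (a) (N (b)) (c))) - (congrArg (fun zz => N (m (N (x)) (zz))) (h1 (N (a)) (b) (c))) + (congrArg (fun zz => N (m (N (x)) (zz))) (h2 (b) (N (a)) (c))) + (congrArg (fun zz => N (N (zz))) (hL (a) (b) (N (c)) (x))) + (congrArg (fun zz => N (N (zz))) (hL (a) (b) (N (x)) (c))) + (congrArg (fun zz => N (N (zz))) (hL (a) (N (b)) (c) (x))) + (congrArg (fun zz => N (N (zz))) (hL (N (a)) (b) (c) (x))) + (congrArg (fun zz => N (N (m (c) (zz)))) (h2 (a) (N (b)) (x))) + (congrArg (fun zz => N (N (m (c) (zz))))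 (h1 (N (a)) (b) (x))) - (congrArg (fun zz => N (N (m (c) (zz)))) (h2 (b) (N (a)) (x))) + (congrArg (fun zz => N (N (zz))) (hc (br (a) (b) (N (c))) (x))) + (congrArg (fun zz => N (N (zz))) (hc (br (a) (b) (N (x))) (c))) + (congrArg (fun zz => N (N (m (zz) (x)))) (h2 (a) (N (b)) (c))) - (congrArg (fun zz => N (N (zz))) (hc (br (a) (c) (N (b))) (x))) + (congrArg (fun zz => N (N (m (zz) (x)))) (h1 (N (a)) (b) (c))) - (congrArg (fun zz => N (N (m (zz) (x)))) (h2 (b) (N (a)) (c))) + (congrArg (fun zz => N (N (zz))) (hc (br (b) (c) (N (a))) (x))) - (congrArg (fun zz => N (N (N (zz)))) (hL (a) (b) (c) (x))) - (congrArg (fun zz => N (N (N (zz)))) (hc (br (a) (b) (c)) (x))) + (hNm (c) (br (a) (b) (N (x)))) + (congrArg (fun zz => m (N (c)) (N (zz))) (h2 (a) (N (b)) (x))) - (hNm (c) (br (a) (x) (N (b)))) + (congrArg (fun zz => m (N (c)) (N (zz))) (h1 (N (a)) (b) (x))) - (congrArg (fun zz => m (N (c)) (N (zz))) (h2 (b)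 (N (a)) (x))) + (hNm (c) (br (b) (x) (N (a)))) - (hNm (c) (N (br (a) (b) (x)))) + (hNm (x) (br (a) (b) (N (c)))) + (congrArg (fun zz => m (N (x)) (N (zz))) (h2 (a) (N (b)) (c))) - (hNm (x) (br (a) (c) (N (b)))) + (congrArg (fun zz => m (N (x)) (N (zz))) (h1 (N (a)) (b) (c))) - (congrArg (fun zz => m (N (x)) (N (zz))) (h2 (b) (N (a)) (c))) + (hNm (x) (br (b) (c) (N (a)))) - (hNm (x) (N (br (a) (b) (c)))) + (congrArg (fun zz => N (m (c) (zz))) (h2 (N (b)) (N (x)) (a))) - (congrArg (fun zz => N (m (c) (zz))) (h1 (N (b)) (a) (N (x)))) + (congrArg (fun zz => N (m (c) (zz))) (h1 (N (x)) (N (a)) (b))) - (congrArg (fun zz => N (m (c) (zz))) (h2 (N (a)) (N (x)) (b))) + (congrArg (fun zz => N (m (c) (zz))) (h1 (N (a)) (b) (N (x)))) - (congrArg (fun zz => N (m (c) (N (zz)))) (h2 (a) (N (b)) (x))) - (congrArg (fun zz => N (m (c) (N (zz)))) (h1 (N (a)) (b) (x))) + (congrArg (fun zz => N (m (c) (N (zz))))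 (h2 (b) (N (a)) (x))) + (congrArg (fun zz => N (m (zz) (x))) (h2 (N (b)) (N (c)) (a))) - (congrArg (fun zz => N (m (zz) (x))) (h1 (N (b)) (a) (N (c)))) + (congrArg (fun zz => N (m (zz) (x))) (h1 (N (c)) (N (a)) (b))) - (congrArg (fun zz => N (m (zz) (x))) (h2 (N (a)) (N (c)) (b))) - (congrArg (fun zz => N (zz)) (hNm (c) (br (a) (b) (x)))) + (congrArg (fun zz => N (zz)) (hc (N (x)) (br (a) (b) (N (c))))) - (congrArg (fun zz => N (zz)) (hNm (x) (br (a) (b) (c)))) - (congrArg (fun zz => N (zz)) (hc (N (br (a) (b) (N (c)))) (x))) - (congrArg (fun zz => N (m (N (zz)) (x))) (h2 (a) (N (b)) (c))) + (congrArg (fun zz => N (zz)) (hc (N (br (a) (c) (N (b)))) (x))) - (congrArg (fun zz => N (m (N (zz)) (x))) (h1 (N (a)) (b) (c))) + (congrArg (fun zz => N (m (N (zz)) (x))) (h2 (b) (N (a)) (c))) - (congrArg (fun zz => N (zz)) (hc (N (br (b) (c) (N (a)))) (x))) + (congrArg (fun zz => N (zz)) (hc (N (N (br (a) (b) (c))))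 (x))) + (congrArg (fun zz => N (br (a) (b) (zz))) (hNm (c) (x))) - (congrArg (fun zz => N (zz)) (hL (a) (b) (N (c)) (N (x))))
  · -- G13
    intro a b
    linear_combination (norm := ((try simp only [odotFun, ttotFun, map_add, map_sub, map_neg, LinearMap.add_apply, LinearMap.sub_apply, LinearMap.neg_apply]); (try abel))) (hc (N (b)) (a))
  · -- G14
    intro a b c
    linear_combination (norm := ((try simp only [odotFun, ttotFun, map_add, map_sub, map_neg, LinearMap.add_apply, LinearMap.sub_apply, LinearMap.neg_apply]); (try abel))) (h2 (N (b)) (N (c)) (a)) - (h1 (N (b)) (a) (N (c))) + (h1 (N (c)) (N (a)) (b)) - (h2 (N (a)) (N (c)) (b))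


end NPPaper
end

section
/- Let (A, ·, {,,}) be a Nambu-Poisson algebra over a field k of characteristic 0, (V;μ,ρ) a representation, and (φ,ψ) a Nambu-Poisson 2-cocycle of A with coefficients in V. Then a linear map r: V→A is a (φ,ψ)-twisted O-operator on A with respect to V if and only if the graph Graph(r) = {(r(u), u) | u ∈ V} is a subalgebra of the (φ,ψ)-twisted semidirect product Nambu-Poisson algebra A ⋉_{(φ,ψ)} V, i.e. Graph(r) is closed under the operations (a,u)·_{⋉φ}(b,v) := (a·b, μ(a)v + μ(b)u + φ(a,b)) and {(a,u),(b,v),(c,w)}_{⋉ψ} := ({a,b,c}, ρ(a,b)w + ρ(b,c)u + ρ(c,a)v + ψ(a,b,c)). -/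
namespace NPPaper

variable {A V : Type*} [AddCommGroup A] [AddCommGroup V]

theorem statement17 {k : Type*} [Field k] [CharZero k]
    {A : Type*} [AddCommGroup A] [Module k A]
    {V : Type*} [AddCommGroup V] [Module k V]
    (m : A →ₗ[k] A →ₗ[k] A) (br : A →ₗ[k] A →ₗ[k] A →ₗ[k] A)
    (μ : A →ₗ[k] V →ₗ[k] V) (ρ : A →ₗ[k] A →ₗ[k] V →ₗ[k] V)
    (φ : A →ₗ[k] A →ₗ[k] V) (ψ : A →ₗ[k] A →ₗ[k] A →ₗ[k] V)
    (hA : IsNambuPoissonFun (fun a b => m a b) (fun a b c => br a b c))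
    (hrep : IsNPRepFun (fun a b => m a b) (fun a b c => br a b c)
        (fun a v => μ a v) (fun a b v => ρ a b v))
    (hcoc : IsNP2CocycleFun (fun a b => m a b) (fun a b c => br a b c)
        (fun a v => μ a v) (fun a b v => ρ a b v)
        (fun a b => φ a b) (fun a b c => ψ a b c))
    (r : V →ₗ[k] A) :
    IsTwistedOFun (fun a b => m a b) (fun a b c => br a b c)
        (fun a v => μ a v) (fun a b v => ρ a b v)
        (fun a b => φ a b) (fun a b c => ψ a b c) (fun v => r v) ↔
      ((∀ p q : A × V,
          p ∈ Set.range (fun u : V => ((r u : A), u)) →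
          q ∈ Set.range (fun u : V => ((r u : A), u)) →
          (m p.1 q.1, μ p.1 q.2 + μ q.1 p.2 + φ p.1 q.1)
            ∈ Set.range (fun u : V => ((r u : A), u))) ∧
       (∀ p q w : A × V,
          p ∈ Set.range (fun u : V => ((r u : A), u)) →
          q ∈ Set.range (fun u : V => ((r u : A), u)) →
          w ∈ Set.range (fun u : V => ((r u : A), u)) →
          (br p.1 q.1 w.1,
            ρ p.1 q.1 w.2 + ρ q.1 w.1 p.2 + ρ w.1 p.1 q.2 + ψ p.1 q.1 w.1)
            ∈ Set.range (fun u : V => ((r u : A), u)))) := by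
  constructor
  · rintro ⟨h1, h2⟩
    constructor
    · rintro p q ⟨u, rfl⟩ ⟨v, rfl⟩
      exact ⟨μ (r u) v + μ (r v) u + φ (r u) (r v), by simp [(h1 u v).symm]⟩
    · rintro p q w ⟨u, rfl⟩ ⟨v, rfl⟩ ⟨x, rfl⟩
      exact ⟨ρ (r u) (r v) x + ρ (r v) (r x) u + ρ (r x) (r u) v + ψ (r u) (r v) (r x),
        by simp [(h2 u v x).symm]⟩
  · rintro ⟨h1, h2⟩
    constructor
    · intro u v
      obtain ⟨x, hx⟩ := h1 (r u, u) (r v, v) ⟨u, rfl⟩ ⟨v, rfl⟩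
      have h1' := congrArg Prod.fst hx
      have h2' := congrArg Prod.snd hx
      simp at h1' h2'
      rw [← h2'] at *
      exact h1'.symm
    · intro u v w
      obtain ⟨x, hx⟩ := h2 (r u, u) (r v, v) (r w, w) ⟨u, rfl⟩ ⟨v, rfl⟩ ⟨w, rfl⟩
      have h1' := congrArg Prod.fst hx
      have h2' := congrArg Prod.snd hx
      simp at h1' h2'
      rw [← h2'] at *
      exact h1'.symm

end NPPaper
end
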